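/- arXiv:0711.0802 — 3 statements merged into one kernel-verified Lean document; each statement's English description precedes it below -/
import Mathlib

section
/- Let T : 𝕋 → 𝕋 be an orientation-preserving Lipschitz expanding map, F a flower for T, and f : 𝕋 → ℝ a Lipschitz function. If f can be Lipschitz flattened on F, then there is a unique Lipschitz coboundary g (i.e. g = φ − φ∘T with φ : 𝕋 → ℝ Lipschitz) such that (f+g) restricted to F is constant; moreover the function φ is uniquely determined up to an additive constant, its derivative being given Lebesgue-a.e. by φ' = Σ_{n≥1} (f∘τⁿ)', where τ is a pre-image selector associated to F. -/
open Filter MeasureTheory Set Topology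
open scoped ENNReal NNReal

noncomputable section

/-- The circle `𝕋 = ℝ/ℤ`, with its quotient metric and normalised Lebesgue (Haar) measure. -/
abbrev 𝕋 := UnitAddCircle

/-- The representative in `[0,1)` of a point of the circle. -/
def rep01 (z : 𝕋) : ℝ := ((AddCircle.equivIco 1 0) z : ℝ)

/-- The representative in `[-1/2,1/2)` of a point of the circle. -/
def repSym (z : 𝕋) : ℝ := ((AddCircle.equivIco 1 (-(1/2))) z : ℝ)

/-- The length of the positively oriented (counterclockwise) arc from `a` to `b`. -/
def arcLen (a b : 𝕋) : ℝ := rep01 (b - a)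

/-- The closed positively oriented arc (closed interval) from `a` to `b`. -/
def arc (a b : 𝕋) : Set 𝕋 := (fun t : ℝ => a + (t : 𝕋)) '' Set.Icc 0 (arcLen a b)

/-- The open positively oriented arc (open interval) from `a` to `b`. -/
def openArc (a b : 𝕋) : Set 𝕋 := (fun t : ℝ => a + (t : 𝕋)) '' Set.Ioo 0 (arcLen a b)

/-- `T` is expanding with constant `K`: nearby points have their distance
multiplied by at least `K`. -/
def ExpandingWith (T : 𝕋 → 𝕋) (K : ℝ) : Prop :=
  ∃ ε : ℝ, 0 < ε ∧ ∀ x y : 𝕋, dist x y < ε → K * dist x y ≤ dist (T x) (T y)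

/-- `T` is a (continuous) expanding map of the circle. -/
def Expanding (T : 𝕋 → 𝕋) : Prop :=
  Continuous T ∧ ∃ K : ℝ, 1 < K ∧ ExpandingWith T K

/-- `G : ℝ → ℝ` is a (continuous) lift of the circle map `T`. -/
def IsLift (T : 𝕋 → 𝕋) (G : ℝ → ℝ) : Prop :=
  Continuous G ∧ ∀ t : ℝ, T ((t : ℝ) : 𝕋) = ((G t : ℝ) : 𝕋)

/-- The circle map `T` has degree `k`. -/
def HasDegree (T : 𝕋 → 𝕋) (k : ℤ) : Prop :=
  ∃ G : ℝ → ℝ, IsLift T G ∧ ∀ t : ℝ, G (t + 1) = G t + k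

/-- A Lipschitz self-map of the circle. -/
def LipschitzCirc (T : 𝕋 → 𝕋) : Prop := ∃ C : ℝ≥0, LipschitzWith C T

/-- A real-valued Lipschitz function on the circle. -/
def LipschitzReal (f : 𝕋 → ℝ) : Prop := ∃ C : ℝ≥0, LipschitzWith C f

/-- An orientation-preserving expanding map of the circle (degree `k ≥ 2`). -/
def OPExpanding (T : 𝕋 → 𝕋) : Prop :=
  Expanding T ∧ ∃ k : ℤ, 2 ≤ k ∧ HasDegree T k

/-- An orientation-preserving Lipschitz expanding map of the circle. -/
def OPLExpanding (T : 𝕋 → 𝕋) : Prop :=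
  Expanding T ∧ LipschitzCirc T ∧ ∃ k : ℤ, 2 ≤ k ∧ HasDegree T k

/-- The right-hand limit `lim_{z ↘ x} τ(z)` of `τ` at `x`. -/
def rightLim (τ : 𝕋 → 𝕋) (x : 𝕋) : 𝕋 :=
  limUnder (𝓝[>] (0:ℝ)) (fun t : ℝ => τ (x + (t : 𝕋)))

/-- The left-hand limit `lim_{z ↗ x} τ(z)` of `τ` at `x`. -/
def leftLim (τ : 𝕋 → 𝕋) (x : 𝕋) : 𝕋 :=
  limUnder (𝓝[<] (0:ℝ)) (fun t : ℝ => τ (x + (t : 𝕋)))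

/-- `τ` is a pre-image selector for `T`, with (finite) set `D` of discontinuities:
`τ x ∈ T⁻¹(x)` for all `x`, `τ` is continuous off `D`, and each point of `D` is a
jump discontinuity of `τ` (both one-sided limits exist, are distinct, and `τ x`
equals one of them). -/
def IsPreimageSelector (T τ : 𝕋 → 𝕋) (D : Finset 𝕋) : Prop :=
  (∀ x : 𝕋, T (τ x) = x) ∧
  (∀ x : 𝕋, x ∉ D → ContinuousAt τ x) ∧
  (∀ x ∈ D, ¬ ContinuousAt τ x ∧
    ∃ yl yr : 𝕋, yl ≠ yr ∧
      Tendsto (fun t : ℝ => τ (x + (t : 𝕋))) (𝓝[<] (0:ℝ)) (𝓝 yl) ∧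
      Tendsto (fun t : ℝ => τ (x + (t : 𝕋))) (𝓝[>] (0:ℝ)) (𝓝 yr) ∧
      (τ x = yl ∨ τ x = yr))

/-- `F` is a `p`-flower for `T`: the closure of the image of a pre-image selector
for `T` having exactly `p ≥ 1` discontinuities. -/
def IsPFlower (T : 𝕋 → 𝕋) (p : ℕ) (F : Set 𝕋) : Prop :=
  1 ≤ p ∧ ∃ τ : 𝕋 → 𝕋, ∃ D : Finset 𝕋,
    IsPreimageSelector T τ D ∧ D.card = p ∧ F = closure (Set.range τ)

/-- The discontinuity `x₁` of `τ` which is smallest with respect to the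
counterclockwise order based at `0`. -/
def firstDisc (D : Finset 𝕋) : 𝕋 :=
  if h : ∃ x, x ∈ D ∧ ∀ y ∈ D, arcLen 0 x ≤ arcLen 0 y then h.choose else 0

/-- The base point `y₁`: the pre-image of the first discontinuity `x₁` which is a
left endpoint of a petal (i.e. the right-hand limit of `τ` at `x₁`). -/
def basePt (τ : 𝕋 → 𝕋) (D : Finset 𝕋) : 𝕋 := rightLim τ (firstDisc D)

/-- The discontinuity `x` belongs to the set `A`, i.e. `y(x)` precedes `y'(x)` in
the counterclockwise order based at `y₁`. -/
def inA (τ : 𝕋 → 𝕋) (D : Finset 𝕋) (x : 𝕋) : Prop :=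
  arcLen (basePt τ D) (rightLim τ x) < arcLen (basePt τ D) (leftLim τ x)

open Classical in
/-- The interval `I_x` associated to a discontinuity `x` of `τ`: the arc
`[y(x), y'(x)]` if `y(x)` precedes `y'(x)` in the order based at `y₁`,
and the arc `[y'(x), y(x)]` otherwise. -/
def Iint (τ : 𝕋 → 𝕋) (D : Finset 𝕋) (x : 𝕋) : Set 𝕋 :=
  if inA τ D x then arc (rightLim τ x) (leftLim τ x) else arc (leftLim τ x) (rightLim τ x)

open Classical in
/-- The complementary interval `J_x`. -/
def Jint (τ : 𝕋 → 𝕋) (D : Finset 𝕋) (x : 𝕋) : Set 𝕋 :=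
  if inA τ D x then arc (leftLim τ x) (rightLim τ x) else arc (rightLim τ x) (leftLim τ x)

/-- The function `Σ_{n ≥ 0} χ(τⁿ(S))`; for `S = I_x` this is the function `e_x`. -/
def escapeSum (τ : 𝕋 → 𝕋) (S : Set 𝕋) (z : 𝕋) : ℝ :=
  ∑' n : ℕ, Set.indicator (τ^[n] '' S) (fun _ => (1:ℝ)) z

/-- The escape time function of a set `F`: `e_F(t) = inf {n ≥ 0 : Tⁿ(t) ∉ F}`,
written as `Σ_{n ≥ 0} χ{z : T^m z ∈ F for all m ≤ n}`. -/
def escapeTime (T : 𝕋 → 𝕋) (F : Set 𝕋) (z : 𝕋) : ℝ :=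
  ∑' n : ℕ, Set.indicator {w : 𝕋 | ∀ m ≤ n, T^[m] w ∈ F} (fun _ => (1:ℝ)) z

/-- `f : 𝕋 → ℝ` has derivative `d` at `x`. -/
def HasDerivCirc (f : 𝕋 → ℝ) (x : 𝕋) (d : ℝ) : Prop :=
  HasDerivAt (fun t : ℝ => f (x + (t : 𝕋))) d 0

/-- The (a.e. defined) derivative `f'` of a function `f : 𝕋 → ℝ`. -/
def derivCirc (f : 𝕋 → ℝ) (x : 𝕋) : ℝ :=
  deriv (fun t : ℝ => f (x + (t : 𝕋))) 0

/-- `U : 𝕋 → 𝕋` has derivative `d` at `x`. -/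
def HasDerivCircMap (U : 𝕋 → 𝕋) (x : 𝕋) (d : ℝ) : Prop :=
  HasDerivAt (fun t : ℝ => repSym (U (x + (t : 𝕋)) - U x)) d 0

/-- The (a.e. defined) derivative `U'` of a circle map `U : 𝕋 → 𝕋`. -/
def derivCircMap (U : 𝕋 → 𝕋) (x : 𝕋) : ℝ :=
  deriv (fun t : ℝ => repSym (U (x + (t : 𝕋)) - U x)) 0

/-- The Lipschitz function `φ` flattens `f` on `F`:
`f + φ - φ∘T` restricted to `F` is a constant. -/
def FlattensWith (T : 𝕋 → 𝕋) (f : 𝕋 → ℝ) (F : Set 𝕋) (φ : 𝕋 → ℝ) : Prop :=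
  ∃ c : ℝ, ∀ z ∈ F, f z + φ z - φ (T z) = c

/-- `f` can be Lipschitz flattened on `F`: there is a Lipschitz `φ : 𝕋 → ℝ` such
that the restriction of `f + φ - φ∘T` to `F` is constant. -/
def LipFlattenedOn (T : 𝕋 → 𝕋) (f : 𝕋 → ℝ) (F : Set 𝕋) : Prop :=
  ∃ φ : 𝕋 → ℝ, LipschitzReal φ ∧ FlattensWith T f F φ

/-- The topological support of a Borel measure on the circle. -/
def measSupport (μ : Measure 𝕋) : Set 𝕋 :=
  {x : 𝕋 | ∀ U : Set 𝕋, IsOpen U → x ∈ U → 0 < μ U}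

/-- The set `G` carries the measure `μ`: the topological support of `μ` is
contained in `G`. -/
def Carries (G : Set 𝕋) (μ : Measure 𝕋) : Prop := measSupport μ ⊆ G

/-- A `T`-invariant Borel probability measure. -/
def InvariantProb (T : 𝕋 → 𝕋) (μ : Measure 𝕋) : Prop :=
  IsProbabilityMeasure μ ∧ μ.map T = μ

/-- A Sturmian measure: a `T`-invariant Borel probability measure carried by some
`1`-flower. -/
def Sturmian (T : 𝕋 → 𝕋) (μ : Measure 𝕋) : Prop :=
  InvariantProb T μ ∧ ∃ F : Set 𝕋, IsPFlower T 1 F ∧ Carries F μ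

/-- The maximum ergodic average `α(f) = max_{μ ∈ M} ∫ f dμ`. -/
def maxErgAvg (T : 𝕋 → 𝕋) (f : 𝕋 → ℝ) : ℝ :=
  sSup ((fun μ : Measure 𝕋 => ∫ z, f z ∂μ) '' {μ : Measure 𝕋 | InvariantProb T μ})

/-- `μ` is an `f`-maximizing measure. -/
def IsMaximizing (T : 𝕋 → 𝕋) (f : 𝕋 → ℝ) (μ : Measure 𝕋) : Prop :=
  InvariantProb T μ ∧ ∫ z, f z ∂μ = maxErgAvg T f

/-- `μ` is supported on a periodic orbit of `T`. -/
def SupportedOnPeriodicOrbit (T : 𝕋 → 𝕋) (μ : Measure 𝕋) : Prop :=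
  ∃ x : 𝕋, ∃ n : ℕ, 0 < n ∧ T^[n] x = x ∧
    measSupport μ ⊆ Set.range (fun m : ℕ => T^[m] x)

end

section HelperLemmas

open Function

lemma norm_coe_le' (x : ℝ) : ‖((x:ℝ):𝕋)‖ ≤ |x| := by
  simpa using QuotientAddGroup.norm_mk_le_norm (S := AddSubgroup.zmultiples (1:ℝ)) (m := x)

lemma dist_coe_le (s t : ℝ) : dist ((s:ℝ):𝕋) ((t:ℝ):𝕋) ≤ |s - t| := by
  rw [dist_eq_norm, ← AddCircle.coe_sub]; exact norm_coe_le' _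

lemma lipschitz_coe : LipschitzWith 1 (fun t : ℝ => ((t:ℝ):𝕋)) :=
  LipschitzWith.of_dist_le_mul (fun s t => by simpa [Real.dist_eq] using dist_coe_le s t)

lemma exists_rep (z : 𝕋) : ∃ d : ℝ, 0 ≤ d ∧ d < 1 ∧ ((d:ℝ):𝕋) = z := by
  have h := (AddCircle.equivIco 1 0).symm_apply_apply z
  refine ⟨(AddCircle.equivIco 1 0 z : ℝ), ?_, ?_, ?_⟩
  · have := (AddCircle.equivIco 1 0 z).2.1; simpa using this
  · have := (AddCircle.equivIco 1 0 z).2.2; simpa using this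
  · exact_mod_cast h

lemma dist_T_le_one (z w : 𝕋) : dist z w ≤ 1 := by
  obtain ⟨d, hd0, hd1, hd⟩ := exists_rep (z - w)
  rw [dist_eq_norm, ← hd]
  calc ‖((d:ℝ):𝕋)‖ ≤ |d| := norm_coe_le' d
    _ ≤ 1 := by rw [abs_of_nonneg hd0]; linarith

lemma coe_inj_small {s t : ℝ} (h : ((s:ℝ):𝕋) = ((t:ℝ):𝕋)) (h2 : |s - t| < 1) : s = t := by
  have h3 : ((s - t : ℝ) : 𝕋) = 0 := by rw [AddCircle.coe_sub, h, sub_self]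
  rw [AddCircle.coe_eq_zero_iff] at h3
  obtain ⟨n, hn⟩ := h3
  have h4 : (n:ℝ) = s - t := by simpa using hn
  have hn0 : n = 0 := by
    by_contra h0
    have h5 : (1:ℝ) ≤ |(n:ℝ)| := by exact_mod_cast Int.one_le_abs (by simpa using h0)
    rw [h4] at h5; linarith
  rw [hn0] at h4; simp at h4; linarith

lemma fiber_countable (w : 𝕋) : {t : ℝ | ((t:ℝ):𝕋) = w}.Countable := by
  obtain ⟨r, _, _, hr⟩ := exists_rep w
  apply Set.Countable.mono _ (Set.countable_range (fun n : ℤ => r + n))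
  intro t ht
  have h1 : ((t - r : ℝ) : 𝕋) = 0 := by
    rw [AddCircle.coe_sub, ht, hr, sub_self]
  rw [AddCircle.coe_eq_zero_iff] at h1
  obtain ⟨n, hn⟩ := h1
  exact ⟨n, by simp at hn ⊢; linarith⟩

lemma preimage_countable {S : Set 𝕋} (hS : S.Countable) :
    {t : ℝ | ((t:ℝ):𝕋) ∈ S}.Countable := by
  have : {t : ℝ | ((t:ℝ):𝕋) ∈ S} = ⋃ w ∈ S, {t : ℝ | ((t:ℝ):𝕋) = w} := by
    ext t; simp
  rw [this]
  exact hS.biUnion (fun w _ => fiber_countable w)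

lemma lemA0' {u : ℝ → ℝ} {l a b : ℝ} (hu : Continuous u) (hab : a ≤ b)
    (H : ∀ t ∈ Set.Icc a b, ∃ δ > 0, ∀ r s : ℝ, |r - t| < δ → |s - t| < δ →
      |u r - u s| ≤ l * |r - s|) :
    |u b - u a| ≤ l * (b - a) := by
  rcases eq_or_lt_of_le hab with rfl | hab'
  · simp
  have key : ∀ ε > 0, |u b - u a| ≤ (l + ε) * (b - a) := by
    intro ε hε
    set E := {t : ℝ | t ∈ Set.Icc a b ∧ |u t - u a| ≤ (l + ε) * (t - a)} with hE
    have haE : a ∈ E := ⟨⟨le_refl a, hab⟩, by simp⟩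
    have hEc : IsClosed E := by
      apply IsClosed.inter isClosed_Icc
      exact isClosed_le ((hu.sub continuous_const).abs)
        (continuous_const.mul (continuous_id.sub continuous_const))
    have hEcpt : IsCompact E := (isCompact_Icc.of_isClosed_subset hEc (fun t ht => ht.1))
    have hEne : E.Nonempty := ⟨a, haE⟩
    have hcE : sSup E ∈ E := hEcpt.sSup_mem hEne
    set c := sSup E with hc
    have hcb : c = b := by
      by_contra hne
      have hcIcc : c ∈ Set.Icc a b := hcE.1
      have hclt : c < b := lt_of_le_of_ne hcIcc.2 hne
      obtain ⟨δ, hδ, hloc⟩ := H c hcIcc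
      set t := min b (c + δ/2) with ht
      have htc : c < t := lt_min hclt (by linarith)
      have htIcc : t ∈ Set.Icc a b := ⟨le_trans hcIcc.1 htc.le, min_le_left _ _⟩
      have htloc : |u t - u c| ≤ l * |t - c| := by
        apply hloc t c _ (by simp [hδ])
        have h5 : t - c ≤ δ/2 := by
          have := min_le_right b (c + δ/2); simp only [ht]; linarith [this]
        rw [abs_of_pos (by linarith)]; linarith
      have htE : t ∈ E := by
        refine ⟨htIcc, ?_⟩
        calc |u t - u a| ≤ |u t - u c| + |u c - u a| := abs_sub_le _ _ _
          _ ≤ l * |t - c| + (l + ε) * (c - a) := add_le_add htloc hcE.2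
          _ ≤ (l + ε) * (t - c) + (l + ε) * (c - a) := by
              rw [abs_of_pos (by linarith)]
              have : l * (t - c) ≤ (l + ε) * (t - c) := by nlinarith
              linarith
          _ = (l + ε) * (t - a) := by ring
      have := le_csSup hEcpt.bddAbove htE
      linarith
    have := hcE.2
    rw [hcb] at this
    exact this
  by_contra hcon
  push_neg at hcon
  have h2 : 0 < (|u b - u a| - l * (b - a)) / (2 * (b - a)) := by
    apply div_pos (by linarith) (by linarith)
  have hba : 0 < b - a := by linarith
  have hthis := key _ h2
  have hexp : (l + (|u b - u a| - l * (b - a)) / (2 * (b - a))) * (b - a)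
      = l * (b - a) + (|u b - u a| - l * (b - a)) / 2 := by
    field_simp
  rw [hexp] at hthis
  linarith

lemma lemA0 {u : ℝ → ℝ} {l a b : ℝ} (hu : Continuous u) (hab : a ≤ b)
    (H : ∀ t ∈ Set.Ioo a b, ∃ δ > 0, ∀ r s : ℝ, |r - t| < δ → |s - t| < δ →
      |u r - u s| ≤ l * |r - s|) :
    |u b - u a| ≤ l * (b - a) := by
  rcases eq_or_lt_of_le hab with rfl | hab'
  · simp
  have hl : 0 ≤ l := by
    obtain ⟨δ, hδ, hloc⟩ := H ((a+b)/2) ⟨by linarith, by linarith⟩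
    set m := min (δ/2) 1 with hm
    have h2 : (0:ℝ) < m := lt_min (by linarith) one_pos
    have h3 : |(a+b)/2 + m - (a+b)/2| = m := by rw [add_sub_cancel_left, abs_of_pos h2]
    have h4 := hloc ((a+b)/2 + m) ((a+b)/2)
      (by rw [h3]; calc m ≤ δ/2 := min_le_left _ _
                     _ < δ := by linarith)
      (by simpa using hδ)
    rw [h3] at h4
    nlinarith [abs_nonneg (u ((a+b)/2 + m) - u ((a+b)/2))]
  have key : ∀ n : ℕ, |u (b - (b-a)/((n:ℝ)+2)) - u (a + (b-a)/((n:ℝ)+2))| ≤ l * (b - a) := by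
    intro n
    have hn2 : (0:ℝ) < (n:ℝ) + 2 := by positivity
    have hpos : 0 < (b-a)/((n:ℝ)+2) := by apply div_pos (by linarith) hn2
    have hle : (b-a)/((n:ℝ)+2) ≤ (b-a)/2 := by
      apply div_le_div_of_nonneg_left (by linarith) (by norm_num) (by linarith)
    have h1 : a + (b-a)/((n:ℝ)+2) ≤ b - (b-a)/((n:ℝ)+2) := by linarith
    have := lemA0' hu h1 (fun t ht => H t ⟨by linarith [ht.1], by linarith [ht.2]⟩)
    calc |u (b - (b-a)/((n:ℝ)+2)) - u (a + (b-a)/((n:ℝ)+2))|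
        ≤ l * ((b - (b-a)/((n:ℝ)+2)) - (a + (b-a)/((n:ℝ)+2))) := this
      _ ≤ l * (b - a) := by apply mul_le_mul_of_nonneg_left (by linarith) hl
  have hq : Filter.Tendsto (fun n : ℕ => (b-a)/((n:ℝ)+2)) Filter.atTop (nhds 0) := by
    apply Filter.Tendsto.div_atTop tendsto_const_nhds
    exact Filter.tendsto_atTop_add_const_right _ 2 tendsto_natCast_atTop_atTop
  have hta : Filter.Tendsto (fun n : ℕ => a + (b-a)/((n:ℝ)+2)) Filter.atTop (nhds a) := by
    simpa using tendsto_const_nhds.add hq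
  have htb : Filter.Tendsto (fun n : ℕ => b - (b-a)/((n:ℝ)+2)) Filter.atTop (nhds b) := by
    simpa using tendsto_const_nhds.sub hq
  have : Filter.Tendsto (fun n : ℕ => |u (b - (b-a)/((n:ℝ)+2)) - u (a + (b-a)/((n:ℝ)+2))|)
      Filter.atTop (nhds (|u b - u a|)) :=
    ((hu.tendsto b).comp htb |>.sub ((hu.tendsto a).comp hta)).abs
  exact le_of_tendsto this (Filter.Eventually.of_forall key)

lemma lemA {u : ℝ → ℝ} {l : ℝ} (hu : Continuous u) (S : Set ℝ) :
    ∀ n : ℕ, ∀ a b : ℝ, a ≤ b → (S ∩ Set.Ioo a b).Finite → (S ∩ Set.Ioo a b).ncard ≤ n →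
    (∀ t ∈ Set.Ioo a b, t ∉ S → ∃ δ > 0, ∀ r s : ℝ, |r - t| < δ → |s - t| < δ →
      |u r - u s| ≤ l * |r - s|) →
    |u b - u a| ≤ l * (b - a) := by
  intro n
  induction n with
  | zero =>
    intro a b hab hfin hcard H
    have hS : S ∩ Set.Ioo a b = ∅ := by
      rw [← Set.ncard_eq_zero hfin] at *; omega
    apply lemA0 hu hab
    intro t ht
    have : t ∉ S := fun hts => by
      have : t ∈ S ∩ Set.Ioo a b := ⟨hts, ht⟩
      rw [hS] at this; exact this
    exact H t ht this
  | succ n ih =>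
    intro a b hab hfin hcard H
    rcases Set.eq_empty_or_nonempty (S ∩ Set.Ioo a b) with hS | hm0
    · apply lemA0 hu hab
      intro t ht
      have : t ∉ S := fun hts => by
        have : t ∈ S ∩ Set.Ioo a b := ⟨hts, ht⟩
        rw [hS] at this; exact this
      exact H t ht this
    · obtain ⟨m, hmS, hm⟩ := hm0
      have hsub1 : S ∩ Set.Ioo a m ⊆ (S ∩ Set.Ioo a b) \ {m} := by
        rintro t ⟨htS, ht⟩
        exact ⟨⟨htS, ht.1, ht.2.trans hm.2⟩, fun h => by simp at h; subst h; exact lt_irrefl _ ht.2⟩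
      have hsub2 : S ∩ Set.Ioo m b ⊆ (S ∩ Set.Ioo a b) \ {m} := by
        rintro t ⟨htS, ht⟩
        exact ⟨⟨htS, hm.1.trans ht.1, ht.2⟩, fun h => by simp at h; subst h; exact lt_irrefl _ ht.1⟩
      have hdfin : ((S ∩ Set.Ioo a b) \ {m}).Finite := hfin.diff
      have hmem : m ∈ S ∩ Set.Ioo a b := ⟨hmS, hm⟩
      have hdcard : ((S ∩ Set.Ioo a b) \ {m}).ncard ≤ n := by
        have := Set.ncard_diff_singleton_lt_of_mem hmem hfin
        omega
      have h1 := ih a m hm.1.le (hdfin.subset hsub1)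
        (le_trans (Set.ncard_le_ncard hsub1 hdfin) hdcard)
        (fun t ht hts => H t ⟨ht.1, ht.2.trans hm.2⟩ hts)
      have h2 := ih m b hm.2.le (hdfin.subset hsub2)
        (le_trans (Set.ncard_le_ncard hsub2 hdfin) hdcard)
        (fun t ht hts => H t ⟨hm.1.trans ht.1, ht.2⟩ hts)
      calc |u b - u a| ≤ |u b - u m| + |u m - u a| := abs_sub_le _ _ _
        _ ≤ l * (b - m) + l * (m - a) := add_le_add h2 h1
        _ = l * (b - a) := by ring

lemma contract_local {T τ : 𝕋 → 𝕋} {K : ℝ} (hK : 1 < K)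
    (hE : ExpandingWith T K) (hTτ : ∀ x, T (τ x) = x) {z : 𝕋}
    (hc : ContinuousAt τ z) :
    ∃ δ > 0, ∀ x y : 𝕋, dist x z < δ → dist y z < δ →
      dist (τ x) (τ y) ≤ K⁻¹ * dist x y := by
  obtain ⟨ε, hε, hexp⟩ := hE
  obtain ⟨δ, hδ, hcont⟩ := Metric.continuousAt_iff.mp hc (ε/2) (by linarith)
  refine ⟨δ, hδ, fun x y hx hy => ?_⟩
  have h1 : dist (τ x) (τ y) < ε := by
    calc dist (τ x) (τ y) ≤ dist (τ x) (τ z) + dist (τ z) (τ y) := dist_triangle _ _ _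
      _ < ε/2 + ε/2 := by
          have h3 := hcont hx
          have h2 := hcont hy
          rw [dist_comm (τ z)]
          exact add_lt_add h3 h2
      _ = ε := by ring
  have h2 := hexp (τ x) (τ y) h1
  rw [hTτ, hTτ] at h2
  rw [inv_mul_eq_div, le_div_iff₀ (by linarith)]
  linarith

lemma contract_iter {T τ : 𝕋 → 𝕋} {K : ℝ} (hK : 1 < K)
    (hE : ExpandingWith T K) (hTτ : ∀ x, T (τ x) = x) (N : ℕ) {z : 𝕋}
    (hgood : ∀ m, m < N → ContinuousAt τ (τ^[m] z)) :
    ∃ δ > 0, ∀ x y : 𝕋, dist x z < δ → dist y z < δ →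
      dist (τ^[N] x) (τ^[N] y) ≤ K⁻¹^N * dist x y := by
  have hK0 : (0:ℝ) < K := by linarith
  induction N with
  | zero => exact ⟨1, one_pos, fun x y _ _ => by simp⟩
  | succ N ih =>
    obtain ⟨δ₁, hδ₁, hcon₁⟩ := ih (fun m hm => hgood m (hm.trans (Nat.lt_succ_self N)))
    obtain ⟨δ₂, hδ₂, hcon₂⟩ := contract_local hK hE hTτ (hgood N (Nat.lt_succ_self N))
    refine ⟨min δ₁ δ₂, lt_min hδ₁ hδ₂, fun x y hx hy => ?_⟩
    have hx₁ : dist x z < δ₁ := lt_of_lt_of_le hx (min_le_left _ _)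
    have hy₁ : dist y z < δ₁ := lt_of_lt_of_le hy (min_le_left _ _)
    have hpow : K⁻¹^N ≤ 1 := pow_le_one₀ (by positivity) (inv_le_one_of_one_le₀ hK.le)
    have hx₂ : dist (τ^[N] x) (τ^[N] z) < δ₂ := by
      calc dist (τ^[N] x) (τ^[N] z) ≤ K⁻¹^N * dist x z := hcon₁ x z hx₁ (by simpa using hδ₁)
        _ ≤ 1 * dist x z := by
            apply mul_le_mul_of_nonneg_right hpow dist_nonneg
        _ < δ₂ := by rw [one_mul]; exact lt_of_lt_of_le hx (min_le_right _ _)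
    have hy₂ : dist (τ^[N] y) (τ^[N] z) < δ₂ := by
      calc dist (τ^[N] y) (τ^[N] z) ≤ K⁻¹^N * dist y z := hcon₁ y z hy₁ (by simpa using hδ₁)
        _ ≤ 1 * dist y z := by
            apply mul_le_mul_of_nonneg_right hpow dist_nonneg
        _ < δ₂ := by rw [one_mul]; exact lt_of_lt_of_le hy (min_le_right _ _)
    rw [Function.iterate_succ_apply', Function.iterate_succ_apply']
    calc dist (τ (τ^[N] x)) (τ (τ^[N] y)) ≤ K⁻¹ * dist (τ^[N] x) (τ^[N] y) :=
        hcon₂ _ _ hx₂ hy₂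
      _ ≤ K⁻¹ * (K⁻¹^N * dist x y) := by
          apply mul_le_mul_of_nonneg_left (hcon₁ x y hx₁ hy₁) (by positivity)
      _ = K⁻¹^(N+1) * dist x y := by rw [pow_succ]; ring

lemma loc_lip {T τ : 𝕋 → 𝕋} {D : Finset 𝕋} {K : ℝ} (hK : 1 < K)
    (hE : ExpandingWith T K) (hτ : IsPreimageSelector T τ D) (N : ℕ) {z : 𝕋}
    (hz : ∀ m, m < N → τ^[m] z ∉ D) :
    ∃ δ > 0, ∀ x y : 𝕋, dist x z < δ → dist y z < δ →
      dist (τ^[N] x) (τ^[N] y) ≤ K⁻¹^N * dist x y :=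
  contract_iter hK hE hτ.1 N (fun m hm => hτ.2.1 _ (hz m hm))

lemma Bset_finite {τ : 𝕋 → 𝕋} (hinj : Function.Injective τ) (D : Finset 𝕋) (N : ℕ) :
    {z : 𝕋 | ∃ m, m < N ∧ τ^[m] z ∈ D}.Finite := by
  have h : {z : 𝕋 | ∃ m, m < N ∧ τ^[m] z ∈ D}
      = ⋃ m ∈ Finset.range N, τ^[m] ⁻¹' (D : Set 𝕋) := by
    ext z; simp
  rw [h]
  apply Set.Finite.biUnion (Finset.range N).finite_toSet
  intro m _
  exact Set.Finite.preimage ((hinj.iterate m).injOn) D.finite_toSet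

lemma deriv_shift (H : ℝ → ℝ) (t₀ : ℝ) : deriv (fun s => H (t₀ + s)) 0 = deriv H t₀ := by
  rw [deriv_comp_const_add H t₀ 0, add_zero]

lemma derivCirc_coe (g : 𝕋 → ℝ) (t₀ : ℝ) :
    derivCirc g ((t₀:ℝ):𝕋) = deriv (fun t : ℝ => g ((t:ℝ):𝕋)) t₀ := by
  unfold derivCirc
  have h : (fun t : ℝ => g (((t₀:ℝ):𝕋) + ((t:ℝ):𝕋)))
      = fun t : ℝ => (fun s : ℝ => g ((s:ℝ):𝕋)) (t₀ + t) := by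
    funext t; rw [← AddCircle.coe_add]
  rw [h]; exact deriv_shift (fun s : ℝ => g ((s:ℝ):𝕋)) t₀

lemma deriv_bound {u : ℝ → ℝ} {t l δ : ℝ} (hδ : 0 < δ) (hl : 0 ≤ l)
    (h : ∀ s, |s - t| < δ → |u s - u t| ≤ l * |s - t|) : |deriv u t| ≤ l := by
  by_cases hd : DifferentiableAt ℝ u t
  · have h1 := hasDerivAt_iff_tendsto_slope.mp hd.hasDerivAt
    have h2 : Filter.Tendsto (fun s => |slope u t s|) (nhdsWithin t {t}ᶜ) (nhds |deriv u t|) :=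
      h1.abs
    apply le_of_tendsto h2
    have h3 : ∀ᶠ s in nhds t, |s - t| < δ := by
      have : Metric.ball t δ ∈ nhds t := Metric.ball_mem_nhds t hδ
      filter_upwards [this] with s hs
      rwa [Metric.mem_ball, Real.dist_eq] at hs
    filter_upwards [nhdsWithin_le_nhds h3, self_mem_nhdsWithin] with s hs hne
    have hne' : s ≠ t := hne
    have h4 : 0 < |s - t| := abs_pos.mpr (sub_ne_zero_of_ne hne')
    rw [slope_def_field, div_eq_mul_inv, abs_mul, abs_inv]
    calc |u s - u t| * |s - t|⁻¹ ≤ (l * |s - t|) * |s - t|⁻¹ := by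
          apply mul_le_mul_of_nonneg_right (h s hs) (by positivity)
      _ = l := by field_simp
  · rw [deriv_zero_of_not_differentiableAt hd]; simpa using hl

lemma null_nondiff {A : ℝ → ℝ} {O : Set ℝ} (C : ℝ≥0)
    (hloc : ∀ t ∈ O, ∃ δ > 0, LipschitzOnWith C A (Metric.ball t δ)) :
    volume {t : ℝ | t ∈ O ∧ ¬ DifferentiableAt ℝ A t} = 0 := by
  choose δ hδ hlip using hloc
  set s : O → Set ℝ := fun i => Metric.ball (i:ℝ) (δ i i.2) with hs
  obtain ⟨Tc, hTc, hTcover⟩ := TopologicalSpace.isOpen_iUnion_countable s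
    (fun i => Metric.isOpen_ball)
  have hcover : {t : ℝ | t ∈ O ∧ ¬ DifferentiableAt ℝ A t}
      ⊆ ⋃ i ∈ Tc, (s i ∩ {x : ℝ | ¬ DifferentiableAt ℝ A x}) := by
    rintro t ⟨htO, htd⟩
    have h1 : t ∈ ⋃ i, s i :=
      Set.mem_iUnion.mpr ⟨⟨t, htO⟩, Metric.mem_ball_self (hδ t htO)⟩
    rw [← hTcover] at h1
    obtain ⟨i, hiT, hi⟩ := Set.mem_iUnion₂.mp h1
    exact Set.mem_biUnion hiT ⟨hi, htd⟩
  apply measure_mono_null hcover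
  rw [measure_biUnion_null_iff hTc]
  intro i _
  have h1 : ∀ᵐ x ∂(volume.restrict (Metric.ball (i:ℝ) (δ i i.2))),
      DifferentiableWithinAt ℝ A (Metric.ball (i:ℝ) (δ i i.2)) x :=
    (hlip i i.2).ae_differentiableWithinAt measurableSet_ball
  rw [ae_restrict_iff' measurableSet_ball] at h1
  have h2 : ∀ᵐ x : ℝ, ¬ (x ∈ s i ∩ {x : ℝ | ¬ DifferentiableAt ℝ A x}) := by
    filter_upwards [h1] with x hx
    rintro ⟨hxb, hxd⟩
    exact hxd ((hx hxb).differentiableAt (Metric.isOpen_ball.mem_nhds hxb))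
  have h3 := ae_iff.mp h2
  simpa only [not_not, Set.setOf_mem_eq] using h3

lemma ae_circle {P : 𝕋 → Prop} {M : Set ℝ} (hMm : MeasurableSet M) (hM0 : volume M = 0)
    (h : ∀ t ∈ Set.Ioc (0:ℝ) (0+1), t ∉ M → P ((t:ℝ):𝕋)) : ∀ᵐ z : 𝕋, P z := by
  set e : 𝕋 → ℝ := fun z => ((AddCircle.equivIoc 1 0 z : ℝ)) with he
  have he_mem : ∀ z, e z ∈ Set.Ioc (0:ℝ) (0+1) := fun z => (AddCircle.equivIoc 1 0 z).2
  have he_coe : ∀ z : 𝕋, ((e z : ℝ) : 𝕋) = z := fun z => by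
    exact_mod_cast (AddCircle.equivIoc 1 0).symm_apply_apply z
  have he_meas : Measurable e :=
    measurable_subtype_coe.comp (AddCircle.measurableEquivIoc 1 0).measurable
  set Q : Set 𝕋 := {z : 𝕋 | e z ∈ M} with hQ
  have hQmeas : MeasurableSet Q := he_meas hMm
  have hQnull : volume Q = 0 := by
    have hmp := UnitAddCircle.measurePreserving_mk 0
    have h1 : volume.restrict (Set.Ioc (0:ℝ) (0+1)) ((fun t : ℝ => ((t:ℝ):𝕋)) ⁻¹' Q)
        = volume Q := hmp.measure_preimage hQmeas.nullMeasurableSet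
    have hpm : Measurable (fun t : ℝ => ((t:ℝ):𝕋)) := lipschitz_coe.continuous.measurable
    rw [Measure.restrict_apply (hpm hQmeas)] at h1
    rw [← h1]
    apply measure_mono_null _ hM0
    rintro t ⟨htQ, htI⟩
    have h2 : e ((t:ℝ):𝕋) = t := by
      apply coe_inj_small (by rw [he_coe])
      have h3 := he_mem ((t:ℝ):𝕋)
      rw [abs_sub_lt_iff]
      constructor
      · have := h3.2; have := htI.1; simp at *; linarith
      · have := h3.1; have := htI.2; simp at *; linarith
    rw [← h2]; exact htQ
  have hsub : {z : 𝕋 | ¬ P z} ⊆ Q := by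
    intro z hz
    by_contra hzQ
    exact hz (by rw [← he_coe z]; exact h (e z) (he_mem z) hzQ)
  rw [ae_iff]
  exact measure_mono_null hsub hQnull

end HelperLemmas


section CoreLemmas

lemma psi_const {T τ : 𝕋 → 𝕋} {D : Finset 𝕋} {K : ℝ} (hK : 1 < K)
    (hE : ExpandingWith T K) (hτ : IsPreimageSelector T τ D)
    {ψ : 𝕋 → ℝ} {L : ℝ≥0} (hψ : LipschitzWith L ψ)
    (hinv : ∀ x, ψ (τ x) = ψ x) : ∀ x y : 𝕋, ψ x = ψ y := by
  have hTτ := hτ.1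
  have hinj : Function.Injective τ := Function.LeftInverse.injective hTτ
  have hK0 : (0:ℝ) < K := by linarith
  have hinviter : ∀ (N : ℕ) (x : 𝕋), ψ (τ^[N] x) = ψ x := by
    intro N x
    induction N with
    | zero => simp
    | succ N ih => rw [Function.iterate_succ_apply', hinv, ih]
  intro x y
  obtain ⟨d, hd0, hd1, hdy⟩ : ∃ d : ℝ, 0 ≤ d ∧ d < 1 ∧ y = x + ((d:ℝ):𝕋) := by
    obtain ⟨d, h0, h1, hd⟩ := exists_rep (y - x)
    exact ⟨d, h0, h1, by rw [hd]; abel⟩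
  set u : ℝ → ℝ := fun t => ψ (x + ((t:ℝ):𝕋)) with hu
  have hucont : Continuous u :=
    hψ.continuous.comp (continuous_const.add lipschitz_coe.continuous)
  have key : ∀ N : ℕ, |u d - u 0| ≤ ((L:ℝ) * K⁻¹^N) * (d - 0) := by
    intro N
    set S : Set ℝ := {t : ℝ | ∃ m, m < N ∧ τ^[m] (x + ((t:ℝ):𝕋)) ∈ D} with hS
    have hg : Set.InjOn (fun t : ℝ => x + ((t:ℝ):𝕋)) (Set.Ioo 0 d) := by
      intro s hs t ht hst
      have h1 : ((s:ℝ):𝕋) = ((t:ℝ):𝕋) := add_right_injective x hst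
      apply coe_inj_small h1
      rw [abs_sub_lt_iff]
      constructor
      · linarith [hs.2, ht.1]
      · linarith [ht.2, hs.1]
    have hBfin : ({z : 𝕋 | ∃ m, m < N ∧ τ^[m] z ∈ D}).Finite := Bset_finite hinj D N
    have hSfin : (S ∩ Set.Ioo 0 d).Finite := by
      apply Set.Finite.of_finite_image _ (hg.mono Set.inter_subset_right)
      apply hBfin.subset
      rintro w ⟨t, ⟨htS, _⟩, rfl⟩
      exact htS
    refine lemA hucont S (S ∩ Set.Ioo 0 d).ncard 0 d hd0 hSfin le_rfl ?_
    intro t _ htS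
    have hzgood : ∀ m, m < N → τ^[m] (x + ((t:ℝ):𝕋)) ∉ D := by
      intro m hm hmem
      exact htS ⟨m, hm, hmem⟩
    obtain ⟨δ, hδ, hcon⟩ := loc_lip hK hE hτ N hzgood
    refine ⟨δ, hδ, fun r s hr hs => ?_⟩
    have hdr : dist (x + ((r:ℝ):𝕋)) (x + ((t:ℝ):𝕋)) < δ := by
      rw [dist_add_left]
      exact lt_of_le_of_lt (dist_coe_le r t) hr
    have hds : dist (x + ((s:ℝ):𝕋)) (x + ((t:ℝ):𝕋)) < δ := by
      rw [dist_add_left]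
      exact lt_of_le_of_lt (dist_coe_le s t) hs
    have h1 : |u r - u s|
        = |ψ (τ^[N] (x + ((r:ℝ):𝕋))) - ψ (τ^[N] (x + ((s:ℝ):𝕋)))| := by
      rw [hinviter N (x + ((r:ℝ):𝕋)), hinviter N (x + ((s:ℝ):𝕋))]
    rw [h1]
    have h2 : |ψ (τ^[N] (x + ((r:ℝ):𝕋))) - ψ (τ^[N] (x + ((s:ℝ):𝕋)))|
        ≤ (L:ℝ) * dist (τ^[N] (x + ((r:ℝ):𝕋))) (τ^[N] (x + ((s:ℝ):𝕋))) := by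
      rw [← Real.dist_eq]
      exact hψ.dist_le_mul _ _
    have h3 : dist (τ^[N] (x + ((r:ℝ):𝕋))) (τ^[N] (x + ((s:ℝ):𝕋)))
        ≤ K⁻¹^N * dist (x + ((r:ℝ):𝕋)) (x + ((s:ℝ):𝕋)) := hcon _ _ hdr hds
    have h4 : dist (x + ((r:ℝ):𝕋)) (x + ((s:ℝ):𝕋)) ≤ |r - s| := by
      rw [dist_add_left]
      exact dist_coe_le r s
    have h5 : (0:ℝ) ≤ K⁻¹^N := by positivity
    calc |ψ (τ^[N] (x + ((r:ℝ):𝕋))) - ψ (τ^[N] (x + ((s:ℝ):𝕋)))|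
        ≤ (L:ℝ) * (K⁻¹^N * |r - s|) := by
          apply le_trans h2
          apply mul_le_mul_of_nonneg_left _ (L:ℝ≥0).coe_nonneg
          apply le_trans h3
          exact mul_le_mul_of_nonneg_left h4 h5
      _ = (L:ℝ) * K⁻¹^N * |r - s| := by ring
  have h0 : Filter.Tendsto (fun N : ℕ => ((L:ℝ) * K⁻¹^N) * (d - 0)) Filter.atTop (nhds 0) := by
    have h1 := tendsto_pow_atTop_nhds_zero_of_lt_one
      (inv_nonneg.mpr hK0.le) (inv_lt_one_of_one_lt₀ hK)
    have h2 := (h1.const_mul (L:ℝ)).mul_const (d - 0)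
    simpa using h2
  have hle : |u d - u 0| ≤ 0 := ge_of_tendsto h0 (Filter.Eventually.of_forall key)
  have heq : u d = u 0 := by
    have h6 := abs_nonneg (u d - u 0)
    have : |u d - u 0| = 0 := le_antisymm hle h6
    rw [abs_eq_zero, sub_eq_zero] at this
    exact this
  have hud : u d = ψ y := by
    show ψ (x + ((d:ℝ):𝕋)) = ψ y
    rw [← hdy]
  have hu0 : u 0 = ψ x := by
    show ψ (x + ((0:ℝ):𝕋)) = ψ x
    norm_num
  rw [hud, hu0] at heq
  exact heq.symm

lemma phi_deriv {T τ : 𝕋 → 𝕋} {D : Finset 𝕋} {K : ℝ} (hK : 1 < K)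
    (hE : ExpandingWith T K) (hτ : IsPreimageSelector T τ D)
    {f : 𝕋 → ℝ} {Lf : ℝ≥0} (hf : LipschitzWith Lf f)
    {φ : 𝕋 → ℝ} {Lφ : ℝ≥0} (hφ : LipschitzWith Lφ φ) {c : ℝ}
    (hflat : ∀ z ∈ closure (Set.range τ), f z + φ z - φ (T z) = c) :
    ∀ᵐ z : 𝕋, derivCirc φ z = ∑' n : ℕ, derivCirc (f ∘ τ^[n + 1]) z := by
  have hTτ := hτ.1
  have hinj : Function.Injective τ := Function.LeftInverse.injective hTτ
  have hK0 : (0:ℝ) < K := by linarith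
  have hKinv0 : (0:ℝ) ≤ K⁻¹ := by positivity
  have hKinv1 : K⁻¹ < 1 := inv_lt_one_of_one_lt₀ hK
  set Hφ : ℝ → ℝ := fun t => φ ((t:ℝ):𝕋) with hHφ
  set A : ℕ → ℝ → ℝ := fun n t => f (τ^[n+1] ((t:ℝ):𝕋)) with hA
  -- telescoping identity
  have tele : ∀ (x : 𝕋) (N : ℕ),
      φ x = φ (τ^[N] x) + (∑ n ∈ Finset.range N, f (τ^[n+1] x)) - N * c := by
    intro x N
    induction N with
    | zero => simp
    | succ N ih =>
      have h := hflat (τ (τ^[N] x)) (subset_closure ⟨τ^[N] x, rfl⟩)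
      rw [hTτ] at h
      rw [← Function.iterate_succ_apply' τ N x] at h
      rw [Finset.sum_range_succ]
      push_cast
      linarith [ih]
  -- bad sets
  have hZφ : volume {t : ℝ | ¬ DifferentiableAt ℝ Hφ t} = 0 := by
    have h1 : LipschitzWith (Lφ * 1) Hφ := hφ.comp lipschitz_coe
    exact ae_iff.mp (h1.ae_differentiableAt)
  have hW : volume {t : ℝ | ∃ N : ℕ, ((t:ℝ):𝕋) ∈ {z : 𝕋 | ∃ m, m < N ∧ τ^[m] z ∈ D}} = 0 := by
    apply Set.Countable.measure_zero _ volume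
    have h1 : {t : ℝ | ∃ N : ℕ, ((t:ℝ):𝕋) ∈ {z : 𝕋 | ∃ m, m < N ∧ τ^[m] z ∈ D}}
        = {t : ℝ | ((t:ℝ):𝕋) ∈ ⋃ N : ℕ, {z : 𝕋 | ∃ m, m < N ∧ τ^[m] z ∈ D}} := by
      ext t; simp
    rw [h1]
    apply preimage_countable
    exact Set.countable_iUnion (fun N => (Bset_finite hinj D N).countable)
  have hZn : ∀ n : ℕ, volume {t : ℝ | (((t:ℝ):𝕋) ∉ {z : 𝕋 | ∃ m, m < n+1 ∧ τ^[m] z ∈ D})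
      ∧ ¬ DifferentiableAt ℝ (A n) t} = 0 := by
    intro n
    apply null_nondiff (Lf * (Real.toNNReal K⁻¹)^(n+1))
    intro t ht
    have hzgood : ∀ m, m < n+1 → τ^[m] ((t:ℝ):𝕋) ∉ D := by
      intro m hm hmem
      exact ht ⟨m, hm, hmem⟩
    obtain ⟨δ, hδ, hcon⟩ := loc_lip hK hE hτ (n+1) hzgood
    refine ⟨δ, hδ, ?_⟩
    apply LipschitzOnWith.of_dist_le_mul
    intro r hr s hs
    rw [Metric.mem_ball, Real.dist_eq] at hr hs
    have hdr : dist ((r:ℝ):𝕋) ((t:ℝ):𝕋) < δ := lt_of_le_of_lt (dist_coe_le r t) hr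
    have hds : dist ((s:ℝ):𝕋) ((t:ℝ):𝕋) < δ := lt_of_le_of_lt (dist_coe_le s t) hs
    have h2 : dist (A n r) (A n s)
        ≤ (Lf:ℝ) * dist (τ^[n+1] ((r:ℝ):𝕋)) (τ^[n+1] ((s:ℝ):𝕋)) := hf.dist_le_mul _ _
    have h3 := hcon _ _ hdr hds
    have h4 : dist ((r:ℝ):𝕋) ((s:ℝ):𝕋) ≤ dist r s := by
      rw [Real.dist_eq]; exact dist_coe_le r s
    have h5 : ((Lf * (Real.toNNReal K⁻¹)^(n+1) : ℝ≥0) : ℝ) = (Lf:ℝ) * K⁻¹^(n+1) := by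
      push_cast
      rw [Real.coe_toNNReal _ hKinv0]
    rw [h5]
    calc dist (A n r) (A n s) ≤ (Lf:ℝ) * (K⁻¹^(n+1) * dist ((r:ℝ):𝕋) ((s:ℝ):𝕋)) :=
        le_trans h2 (mul_le_mul_of_nonneg_left h3 (Lf:ℝ≥0).coe_nonneg)
      _ ≤ (Lf:ℝ) * (K⁻¹^(n+1) * dist r s) := by
          apply mul_le_mul_of_nonneg_left _ (Lf:ℝ≥0).coe_nonneg
          apply mul_le_mul_of_nonneg_left h4 (by positivity)
      _ = (Lf:ℝ) * K⁻¹^(n+1) * dist r s := by ring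
  -- combine bad sets
  set bad : Set ℝ := {t : ℝ | ¬ DifferentiableAt ℝ Hφ t}
    ∪ {t : ℝ | ∃ N : ℕ, ((t:ℝ):𝕋) ∈ {z : 𝕋 | ∃ m, m < N ∧ τ^[m] z ∈ D}}
    ∪ ⋃ n : ℕ, {t : ℝ | (((t:ℝ):𝕋) ∉ {z : 𝕋 | ∃ m, m < n+1 ∧ τ^[m] z ∈ D})
      ∧ ¬ DifferentiableAt ℝ (A n) t} with hbaddef
  have hbad : volume bad = 0 := by
    apply measure_union_null (measure_union_null hZφ hW)
    exact measure_iUnion_null hZn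
  obtain ⟨M, hMsub, hMmeas, hM0⟩ := exists_measurable_superset_of_null hbad
  apply ae_circle hMmeas hM0
  intro t _ htM
  have htb : t ∉ bad := fun h => htM (hMsub h)
  have hDφ : DifferentiableAt ℝ Hφ t := by
    by_contra h
    exact htb (Or.inl (Or.inl h))
  have hWt' : ∀ N : ℕ, ∀ m, m < N → τ^[m] ((t:ℝ):𝕋) ∉ D := by
    intro N m hm hmem
    exact htb (Or.inl (Or.inr ⟨N, m, hm, hmem⟩))
  have hDA : ∀ n : ℕ, DifferentiableAt ℝ (A n) t := by
    intro n
    by_contra h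
    apply htb
    refine Or.inr (Set.mem_iUnion.mpr ⟨n, ?_, h⟩)
    rintro ⟨m, hm, hmem⟩
    exact hWt' (n+1) m hm hmem
  set E : ℕ → ℝ := fun n => deriv (A n) t with hEdef
  -- bound on E n
  have hEbd : ∀ n : ℕ, |E n| ≤ (Lf:ℝ) * K⁻¹^(n+1) := by
    intro n
    obtain ⟨δ, hδ, hcon⟩ := loc_lip hK hE hτ (n+1) (hWt' (n+1))
    apply deriv_bound hδ (by positivity)
    intro s hs
    have hds : dist ((s:ℝ):𝕋) ((t:ℝ):𝕋) < δ := lt_of_le_of_lt (dist_coe_le s t) hs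
    have h2 : |A n s - A n t|
        ≤ (Lf:ℝ) * dist (τ^[n+1] ((s:ℝ):𝕋)) (τ^[n+1] ((t:ℝ):𝕋)) := by
      rw [← Real.dist_eq]; exact hf.dist_le_mul _ _
    have h3 := hcon ((s:ℝ):𝕋) ((t:ℝ):𝕋) hds (by simpa using hδ)
    have h4 : dist ((s:ℝ):𝕋) ((t:ℝ):𝕋) ≤ |s - t| := dist_coe_le s t
    calc |A n s - A n t| ≤ (Lf:ℝ) * (K⁻¹^(n+1) * dist ((s:ℝ):𝕋) ((t:ℝ):𝕋)) :=
        le_trans h2 (mul_le_mul_of_nonneg_left h3 (Lf:ℝ≥0).coe_nonneg)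
      _ ≤ (Lf:ℝ) * (K⁻¹^(n+1) * |s - t|) := by
          apply mul_le_mul_of_nonneg_left _ (Lf:ℝ≥0).coe_nonneg
          apply mul_le_mul_of_nonneg_left h4 (by positivity)
      _ = (Lf:ℝ) * K⁻¹^(n+1) * |s - t| := by ring
  -- partial sums estimate
  have hpartial : ∀ N : ℕ,
      |deriv Hφ t - ∑ n ∈ Finset.range N, E n| ≤ (Lφ:ℝ) * K⁻¹^N := by
    intro N
    have hAsum : HasDerivAt (fun s : ℝ => ∑ n ∈ Finset.range N, A n s)
        (∑ n ∈ Finset.range N, E n) t :=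
      HasDerivAt.fun_sum (fun i _ => (hDA i).hasDerivAt)
    have hRdef : (fun s : ℝ => φ (τ^[N] ((s:ℝ):𝕋)))
        = fun s : ℝ => Hφ s - (∑ n ∈ Finset.range N, A n s) + (N:ℝ) * c := by
      funext s
      have h := tele ((s:ℝ):𝕋) N
      simp only [hHφ, hA]
      linarith [h]
    have hErr : HasDerivAt (fun s : ℝ => φ (τ^[N] ((s:ℝ):𝕋)))
        (deriv Hφ t - ∑ n ∈ Finset.range N, E n) t := by
      rw [hRdef]
      exact (hDφ.hasDerivAt.sub hAsum).add_const _
    rw [← hErr.deriv]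
    obtain ⟨δ, hδ, hcon⟩ := loc_lip hK hE hτ N (hWt' N)
    apply deriv_bound hδ (by positivity)
    intro s hs
    have hds : dist ((s:ℝ):𝕋) ((t:ℝ):𝕋) < δ := lt_of_le_of_lt (dist_coe_le s t) hs
    have h2 : |φ (τ^[N] ((s:ℝ):𝕋)) - φ (τ^[N] ((t:ℝ):𝕋))|
        ≤ (Lφ:ℝ) * dist (τ^[N] ((s:ℝ):𝕋)) (τ^[N] ((t:ℝ):𝕋)) := by
      rw [← Real.dist_eq]; exact hφ.dist_le_mul _ _
    have h3 := hcon ((s:ℝ):𝕋) ((t:ℝ):𝕋) hds (by simpa using hδ)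
    have h4 : dist ((s:ℝ):𝕋) ((t:ℝ):𝕋) ≤ |s - t| := dist_coe_le s t
    calc |φ (τ^[N] ((s:ℝ):𝕋)) - φ (τ^[N] ((t:ℝ):𝕋))|
        ≤ (Lφ:ℝ) * (K⁻¹^N * dist ((s:ℝ):𝕋) ((t:ℝ):𝕋)) :=
        le_trans h2 (mul_le_mul_of_nonneg_left h3 (Lφ:ℝ≥0).coe_nonneg)
      _ ≤ (Lφ:ℝ) * (K⁻¹^N * |s - t|) := by
          apply mul_le_mul_of_nonneg_left _ (Lφ:ℝ≥0).coe_nonneg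
          apply mul_le_mul_of_nonneg_left h4 (by positivity)
      _ = (Lφ:ℝ) * K⁻¹^N * |s - t| := by ring
  -- summability and limits
  have hsum : Summable E := by
    apply Summable.of_norm_bounded (g := fun n : ℕ => ((Lf:ℝ) * K⁻¹) * K⁻¹^n)
      (Summable.mul_left _ (summable_geometric_of_lt_one hKinv0 hKinv1))
    intro n
    rw [Real.norm_eq_abs]
    calc |E n| ≤ (Lf:ℝ) * K⁻¹^(n+1) := hEbd n
      _ = ((Lf:ℝ) * K⁻¹) * K⁻¹^n := by rw [pow_succ]; ring
  have hlim1 : Filter.Tendsto (fun N : ℕ => ∑ n ∈ Finset.range N, E n)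
      Filter.atTop (nhds (∑' n, E n)) := hsum.hasSum.tendsto_sum_nat
  have hlim2 : Filter.Tendsto (fun N : ℕ => ∑ n ∈ Finset.range N, E n)
      Filter.atTop (nhds (deriv Hφ t)) := by
    rw [tendsto_iff_norm_sub_tendsto_zero]
    apply squeeze_zero (g := fun N : ℕ => (Lφ:ℝ) * K⁻¹^N) (fun N => norm_nonneg _)
      (fun N => by rw [Real.norm_eq_abs, abs_sub_comm]; exact hpartial N)
    have h1 := tendsto_pow_atTop_nhds_zero_of_lt_one hKinv0 hKinv1
    simpa using h1.const_mul (Lφ:ℝ)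
  have hfinal : deriv Hφ t = ∑' n, E n := tendsto_nhds_unique hlim2 hlim1
  -- translate to derivCirc
  have hL : derivCirc φ ((t:ℝ):𝕋) = deriv Hφ t := derivCirc_coe φ t
  have hR : ∀ n : ℕ, derivCirc (f ∘ τ^[n+1]) ((t:ℝ):𝕋) = E n := by
    intro n
    exact derivCirc_coe (f ∘ τ^[n+1]) t
  rw [hL, hfinal]
  exact (tsum_congr hR).symm

end CoreLemmas


/-- **Theorem (uniqueness of the flattening coboundary).** If the Lipschitz function `f`
can be Lipschitz flattened on the flower `F = closure(range τ)`, then there is a unique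
Lipschitz coboundary `g = φ - φ∘T` with `(f+g)|_F` constant; moreover `φ` is unique up to
an additive constant and `φ' = Σ_{n≥1} (f∘τⁿ)'` Lebesgue-a.e. -/
theorem unique_flattening_coboundary
    (T τ : 𝕋 → 𝕋) (D : Finset 𝕋)
    (hT : OPLExpanding T) (hτ : IsPreimageSelector T τ D) (hD : D.Nonempty)
    (f : 𝕋 → ℝ) (hf : LipschitzReal f)
    (hflat : LipFlattenedOn T f (closure (Set.range τ))) :
    (∃! g : 𝕋 → ℝ,
        (∃ φ : 𝕋 → ℝ, LipschitzReal φ ∧ g = fun z => φ z - φ (T z)) ∧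
        ∃ c : ℝ, ∀ z ∈ closure (Set.range τ), f z + g z = c) ∧
    (∀ φ₁ φ₂ : 𝕋 → ℝ, LipschitzReal φ₁ → LipschitzReal φ₂ →
        FlattensWith T f (closure (Set.range τ)) φ₁ →
        FlattensWith T f (closure (Set.range τ)) φ₂ →
        ∃ c : ℝ, ∀ z : 𝕋, φ₁ z = φ₂ z + c) ∧
    (∀ φ : 𝕋 → ℝ, LipschitzReal φ → FlattensWith T f (closure (Set.range τ)) φ →
        ∀ᵐ z : 𝕋, derivCirc φ z = ∑' n : ℕ, derivCirc (f ∘ τ^[n + 1]) z) := by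
  obtain ⟨⟨hTcont, K, hK, hE⟩, hTLip, hdeg⟩ := hT
  obtain ⟨φ₀, hφ₀lip, c₀, hc₀⟩ := hflat
  obtain ⟨L₀, hL₀⟩ := hφ₀lip
  have hTτ : ∀ x, T (τ x) = x := hτ.1
  have part2 : ∀ φ₁ φ₂ : 𝕋 → ℝ, LipschitzReal φ₁ → LipschitzReal φ₂ →
      FlattensWith T f (closure (Set.range τ)) φ₁ →
      FlattensWith T f (closure (Set.range τ)) φ₂ →
      ∃ c : ℝ, ∀ z : 𝕋, φ₁ z = φ₂ z + c := by
    rintro φ₁ φ₂ ⟨L₁, hL₁⟩ ⟨L₂, hL₂⟩ ⟨c₁, hc₁⟩ ⟨c₂, hc₂⟩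
    set ψ : 𝕋 → ℝ := fun z => φ₁ z - φ₂ z with hψdef
    have hψlip : LipschitzWith (L₁ + L₂) ψ := hL₁.sub hL₂
    have hstep : ∀ x, ψ (τ x) = ψ x + (c₁ - c₂) := by
      intro x
      have h1 := hc₁ (τ x) (subset_closure ⟨x, rfl⟩)
      have h2 := hc₂ (τ x) (subset_closure ⟨x, rfl⟩)
      rw [hTτ] at h1 h2
      show φ₁ (τ x) - φ₂ (τ x) = (φ₁ x - φ₂ x) + (c₁ - c₂)
      linarith
    have hiter : ∀ (N : ℕ) (x : 𝕋), ψ (τ^[N] x) = ψ x + N * (c₁ - c₂) := by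
      intro N x
      induction N with
      | zero => simp
      | succ N ih =>
        rw [Function.iterate_succ_apply', hstep, ih]
        push_cast
        ring
    have hc12 : c₁ - c₂ = 0 := by
      by_contra h0
      obtain ⟨N, hN⟩ := exists_nat_gt (((L₁:ℝ) + (L₂:ℝ)) / |c₁ - c₂|)
      have h1 := hiter N 0
      have h2 : |ψ (τ^[N] 0) - ψ 0| ≤ ((L₁:ℝ) + (L₂:ℝ)) := by
        have h3 := hψlip.dist_le_mul (τ^[N] 0) 0
        rw [Real.dist_eq] at h3
        have h4 := dist_T_le_one (τ^[N] (0:𝕋)) 0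
        push_cast at h3
        nlinarith [(L₁:ℝ≥0).coe_nonneg, (L₂:ℝ≥0).coe_nonneg, dist_nonneg (x := τ^[N] (0:𝕋)) (y := (0:𝕋))]
      rw [h1] at h2
      have h5 : |(N:ℝ) * (c₁ - c₂)| = N * |c₁ - c₂| := by
        rw [abs_mul, Nat.abs_cast]
      have h6 : (N:ℝ) * |c₁ - c₂| ≤ (L₁:ℝ) + (L₂:ℝ) := by
        rw [← h5]
        simpa using h2
      have h7 : 0 < |c₁ - c₂| := abs_pos.mpr (sub_ne_zero_of_ne (by intro h; exact h0 (by rw [h]; ring)))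
      rw [div_lt_iff₀ h7] at hN
      linarith
    have hinv : ∀ x, ψ (τ x) = ψ x := by
      intro x
      rw [hstep, hc12, add_zero]
    have hconst := psi_const hK hE hτ hψlip hinv
    refine ⟨ψ 0, fun z => ?_⟩
    have := hconst z 0
    show φ₁ z = φ₂ z + (φ₁ 0 - φ₂ 0)
    have h8 : φ₁ z - φ₂ z = φ₁ 0 - φ₂ 0 := this
    linarith
  refine ⟨?_, part2, ?_⟩
  · refine ⟨fun z => φ₀ z - φ₀ (T z),
      ⟨⟨φ₀, ⟨L₀, hL₀⟩, rfl⟩, c₀, fun z hz => by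
        have := hc₀ z hz
        show f z + (φ₀ z - φ₀ (T z)) = c₀
        linarith⟩, ?_⟩
    rintro g ⟨⟨φ, hφlip, rfl⟩, c, hc⟩
    obtain ⟨cc, hcc⟩ := part2 φ φ₀ hφlip ⟨L₀, hL₀⟩
      ⟨c, fun z hz => by
        have h9 : f z + (φ z - φ (T z)) = c := hc z hz
        linarith⟩
      ⟨c₀, hc₀⟩
    funext z
    rw [hcc z, hcc (T z)]
    ring
  · intro φ hφlip hφflat
    obtain ⟨L, hL⟩ := hφlip
    obtain ⟨c, hc⟩ := hφflat
    obtain ⟨Lf, hLf⟩ := hf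
    exact phi_deriv hK hE hτ hLf hL hc
end

section
/- Let T : 𝕋 → 𝕋 be an orientation-preserving Lipschitz expanding map, f : 𝕋 → ℝ a Lipschitz function, and (F_γ)_{γ∈𝕋} the one-parameter family of all 1-flowers of T. Then the map γ ↦ ∫ f' e_{F_γ} dLeb is continuous on 𝕋, where e_{F_γ} is the escape time function of F_γ. -/
open Filter MeasureTheory Set Topology
open scoped ENNReal NNReal

noncomputable section EscAux
namespace EscAux

open Filter MeasureTheory Set Topology
open scoped ENNReal NNReal

/-! ### Basic circle lemmas -/

lemma coe_int_zero (n : ℤ) : ((n : ℝ) : 𝕋) = 0 := by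
  rw [AddCircle.coe_eq_zero_iff]
  exact ⟨n, by simp⟩

lemma coe_eq_coe_iff {x y : ℝ} : (x : 𝕋) = (y : 𝕋) ↔ ∃ n : ℤ, x - y = (n : ℝ) := by
  constructor
  · intro h
    have : ((x - y : ℝ) : 𝕋) = 0 := by
      rw [AddCircle.coe_sub, h, sub_self]
    rw [AddCircle.coe_eq_zero_iff] at this
    obtain ⟨n, hn⟩ := this
    exact ⟨n, by simpa using hn.symm⟩
  · rintro ⟨n, hn⟩
    have : x = y + n := by linarith
    rw [this, AddCircle.coe_add, coe_int_zero, add_zero]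

lemma norm_coe_le (x : ℝ) : ‖(x : 𝕋)‖ ≤ |x| := by
  rw [UnitAddCircle.norm_eq, abs_sub_round_eq_min]
  rcases le_or_gt 0 x with h | h
  · refine (min_le_left _ _).trans ?_
    rw [abs_of_nonneg h]
    have h0 : (0:ℝ) ≤ (⌊x⌋ : ℝ) := by exact_mod_cast Int.floor_nonneg.mpr h
    rw [Int.fract]
    linarith
  · refine (min_le_right _ _).trans ?_
    rw [abs_of_neg h]
    have hfl : ⌊x⌋ < 0 := Int.floor_lt.mpr (by exact_mod_cast h)
    have h1 : (⌊x⌋ : ℝ) ≤ -1 := by exact_mod_cast (by omega : ⌊x⌋ ≤ -1)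
    have := Int.floor_le x
    rw [Int.fract]
    linarith

lemma dist_coe_le (x y : ℝ) : dist (x : 𝕋) (y : 𝕋) ≤ |x - y| := by
  rw [dist_eq_norm, ← AddCircle.coe_sub]
  exact norm_coe_le _

lemma norm_coe_eq {x : ℝ} (h : |x| ≤ 1 / 2) : ‖(x : 𝕋)‖ = |x| := by
  refine (AddCircle.norm_coe_eq_abs_iff (p := 1) one_ne_zero).2 ?_
  simpa using h

lemma dist_coe_eq {x y : ℝ} (h : |x - y| ≤ 1 / 2) : dist (x : 𝕋) (y : 𝕋) = |x - y| := by
  rw [dist_eq_norm, ← AddCircle.coe_sub]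
  exact norm_coe_eq h

end EscAux
end EscAux

/-! ### Representatives -/

namespace EscAux

lemma coe_equivIco (aa : ℝ) (z : 𝕋) : (((AddCircle.equivIco 1 aa) z : ℝ) : 𝕋) = z :=
  (AddCircle.equivIco 1 aa).symm_apply_apply z

lemma equivIco_mem (aa : ℝ) (z : 𝕋) : ((AddCircle.equivIco 1 aa) z : ℝ) ∈ Ico aa (aa + 1) :=
  ((AddCircle.equivIco 1 aa) z).2

lemma coe_rep01 (z : 𝕋) : ((rep01 z : ℝ) : 𝕋) = z := coe_equivIco 0 z

lemma rep01_mem (z : 𝕋) : rep01 z ∈ Ico (0 : ℝ) 1 := by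
  have := equivIco_mem 0 z
  simpa [rep01] using this

lemma coe_repSym (z : 𝕋) : ((repSym z : ℝ) : 𝕋) = z := coe_equivIco _ z

lemma repSym_mem (z : 𝕋) : repSym z ∈ Ico (-(1/2) : ℝ) (1/2) := by
  have h : repSym z ∈ Ico (-(1/2) : ℝ) (-(1/2) + 1) := equivIco_mem (-(1/2)) z
  exact ⟨h.1, by have := h.2; linarith⟩

lemma abs_repSym (z : 𝕋) : |repSym z| = ‖z‖ := by
  conv_rhs => rw [← coe_repSym z]
  rw [UnitAddCircle.norm_eq]
  have h0 : round (repSym z) = 0 := round_eq_zero_iff.mpr (repSym_mem z)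
  rw [h0]
  simp

lemma unique_in_Ico {c x y : ℝ} (hx : x ∈ Ico c (c + 1)) (hy : y ∈ Ico c (c + 1))
    (h : (x : 𝕋) = (y : 𝕋)) : x = y := by
  obtain ⟨n, hn⟩ := coe_eq_coe_iff.mp h
  have h1 : |(n : ℝ)| < 1 := by
    rw [← hn, abs_lt]
    obtain ⟨hx1, hx2⟩ := hx; obtain ⟨hy1, hy2⟩ := hy
    constructor <;> linarith
  have h2 : n = 0 := by
    obtain ⟨l1, l2⟩ := abs_lt.mp h1
    have l1' : -1 < n := by exact_mod_cast l1
    have l2' : n < 1 := by exact_mod_cast l2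
    omega
  rw [h2] at hn
  push_cast at hn
  linarith

lemma rep01_coe {x : ℝ} (hx : x ∈ Ico (0:ℝ) 1) : rep01 ((x : ℝ) : 𝕋) = x := by
  refine unique_in_Ico (c := 0) ?_ ?_ (coe_rep01 _)
  · have h : rep01 ((x:ℝ):𝕋) ∈ Ico (0:ℝ) (0+1) := by
      have := rep01_mem ((x : ℝ) : 𝕋); simpa using this
    exact h
  · simpa using hx

end EscAux

/-! ### Good lifts of expanding circle maps -/

namespace EscAux

structure GoodLift (T : 𝕋 → 𝕋) (G : ℝ → ℝ) (K : ℝ) (k : ℤ) : Prop where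
  contT : Continuous T
  lift : ∀ t : ℝ, T ((t : ℝ) : 𝕋) = ((G t : ℝ) : 𝕋)
  contG : Continuous G
  hK : 1 < K
  per : ∀ t : ℝ, G (t + 1) = G t + k
  hk : 2 ≤ k
  expand : ∀ u v : ℝ, u ≤ v → K * (v - u) ≤ G v - G u

lemma exists_goodLift {T : 𝕋 → 𝕋} (hT : OPLExpanding T) :
    ∃ G K k, GoodLift T G K k := by
  obtain ⟨⟨contT, K, hK, ε, hε, hexp⟩, _hlip, k, hk, G, ⟨contG, hlift⟩, hper⟩ := hT
  set δ : ℝ := min ε 1 / 4 with hδdef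
  have hmin : 0 < min ε 1 := lt_min hε one_pos
  have hδpos : 0 < δ := by rw [hδdef]; linarith
  have hδε : δ < ε := by
    have h1 : min ε 1 ≤ ε := min_le_left _ _
    rw [hδdef]; linarith
  have hδhalf : δ ≤ 1 / 2 := by
    have h1 : min ε 1 ≤ 1 := min_le_right _ _
    rw [hδdef]; linarith
  have stepA : ∀ u v : ℝ, |u - v| ≤ δ → K * |u - v| ≤ |G u - G v| := by
    intro u v h
    have hd : dist ((u : ℝ) : 𝕋) ((v : ℝ) : 𝕋) = |u - v| := dist_coe_eq (h.trans hδhalf)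
    have h2 : K * dist ((u : ℝ) : 𝕋) ((v : ℝ) : 𝕋) ≤ dist (T ↑u) (T ↑v) :=
      hexp _ _ (by rw [hd]; exact lt_of_le_of_lt h hδε)
    rw [hd] at h2
    calc K * |u - v| ≤ dist (T ↑u) (T ↑v) := h2
      _ = dist ((G u : ℝ) : 𝕋) ((G v : ℝ) : 𝕋) := by rw [hlift, hlift]
      _ ≤ |G u - G v| := dist_coe_le _ _
  have perN : ∀ (t : ℝ) (n : ℕ), G (t + n) = G t + n * k := by
    intro t n
    induction n with
    | zero => simp
    | succ n ih =>
      have h1 := hper (t + n)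
      have h2 : t + ((n : ℝ) + 1) = t + n + 1 := by ring
      push_cast
      rw [h2, h1, ih]
      ring
  obtain ⟨t0, ht0, hmin01⟩ := isCompact_Icc.exists_isMinOn
    (nonempty_Icc.mpr zero_le_one) contG.continuousOn
  set B := G t0 with hB
  have hmin01 : ∀ x ∈ Icc (0:ℝ) 1, B ≤ G x := fun x hx => hmin01 hx
  have lbound : ∀ m : ℝ, 0 ≤ m → B + ⌊m⌋ * k ≤ G m := by
    intro m hm
    have hfloor : (0 : ℤ) ≤ ⌊m⌋ := Int.floor_nonneg.mpr hm
    have hG : G (Int.fract m + (⌊m⌋.toNat : ℕ)) = G (Int.fract m) + (⌊m⌋.toNat : ℕ) * k :=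
      perN _ _
    have hrw : Int.fract m + ((⌊m⌋.toNat : ℕ) : ℝ) = m := by
      have : ((⌊m⌋.toNat : ℕ) : ℝ) = (⌊m⌋ : ℝ) := by
        rw [← Int.cast_natCast, Int.toNat_of_nonneg hfloor]
      rw [this, Int.fract, sub_add_cancel]
    rw [hrw] at hG
    have hBle : B ≤ G (Int.fract m) :=
      hmin01 _ ⟨(Int.fract_nonneg m), (Int.fract_lt_one m).le⟩
    have hcast : ((⌊m⌋.toNat : ℕ) : ℝ) = (⌊m⌋ : ℝ) := by
      rw [← Int.cast_natCast, Int.toNat_of_nonneg hfloor]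
    rw [hG, hcast]
    linarith
  have hkpos : (0 : ℝ) < (k : ℝ) := by exact_mod_cast lt_of_lt_of_le (by norm_num) hk
  have φpos : ∀ s : ℝ, 0 < s → s ≤ δ → ∀ t : ℝ, 0 < G (t + s) - G t := by
    intro s hs hsδ
    have hne : ∀ t, G (t + s) - G t ≠ 0 := by
      intro t h0
      have h1 := stepA (t + s) t (by rw [show t + s - t = s by ring, abs_of_pos hs]; exact hsδ)
      rw [show t + s - t = s by ring, abs_of_pos hs] at h1
      rw [show G (t+s) - G t = 0 from h0] at h1
      simp only [abs_zero] at h1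
      nlinarith
    by_contra hcon
    push_neg at hcon
    obtain ⟨t1, ht1⟩ := hcon
    have hlt1 : G (t1 + s) - G t1 < 0 := lt_of_le_of_ne ht1 (hne t1)
    have hneg : ∀ t, G (t + s) - G t < 0 := by
      intro t
      rcases lt_or_gt_of_ne (hne t) with h | h
      · exact h
      · exfalso
        set φ : ℝ → ℝ := fun r => G (r + s) - G r with hφ
        have hφc : Continuous φ := (contG.comp (continuous_id.add continuous_const)).sub contG
        have hmem : (0 : ℝ) ∈ uIcc (φ t1) (φ t) := mem_uIcc.mpr (Or.inl ⟨hlt1.le, h.le⟩)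
        obtain ⟨x, _, hx⟩ := intermediate_value_uIcc hφc.continuousOn hmem
        exact hne x hx
    have hiter : ∀ m : ℕ, G (m * s) ≤ G 0 := by
      intro m
      induction m with
      | zero => simp
      | succ m ih =>
        have h1 := hneg ((m : ℝ) * s)
        have h2 : ((m : ℝ) + 1) * s = (m : ℝ) * s + s := by ring
        push_cast
        rw [h2]
        linarith
    obtain ⟨n0, hn0⟩ := exists_nat_gt ((G 0 - B) / (k : ℝ))
    obtain ⟨m, hm⟩ := exists_nat_gt (((n0 : ℝ) + 1) / s)
    have hms : (n0 : ℝ) + 1 ≤ (m : ℝ) * s := by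
      rw [div_lt_iff₀ hs] at hm
      linarith
    have hfl : ((n0 : ℕ) : ℤ) ≤ ⌊(m : ℝ) * s⌋ := by
      rw [Int.le_floor]
      push_cast
      linarith
    have hfl' : ((n0 : ℝ)) ≤ (⌊(m : ℝ) * s⌋ : ℝ) := by exact_mod_cast hfl
    have hlb := lbound ((m : ℝ) * s) (by positivity)
    have hBn : B + (n0 : ℝ) * k ≤ G ((m : ℝ) * s) := by nlinarith
    have hG0 : G 0 - B < (n0 : ℝ) * k := by
      rw [div_lt_iff₀ hkpos] at hn0
      linarith
    linarith [hiter m]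
  have localExp : ∀ u v : ℝ, u ≤ v → v ≤ u + δ → K * (v - u) ≤ G v - G u := by
    intro u v huv hvd
    rcases eq_or_lt_of_le huv with rfl | h
    · simp
    · have h1 := stepA v u (by rw [abs_of_pos (by linarith : (0:ℝ) < v - u)]; linarith)
      have h2 : 0 < G (u + (v - u)) - G u := φpos (v - u) (by linarith) (by linarith) u
      rw [show u + (v - u) = v by ring] at h2
      rw [abs_of_pos (by linarith : (0:ℝ) < v - u), abs_of_pos h2] at h1
      exact h1
  have main : ∀ n : ℕ, ∀ u v : ℝ, u ≤ v → v - u ≤ n * δ → K * (v - u) ≤ G v - G u := by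
    intro n
    induction n with
    | zero =>
      intro u v h1 h2
      simp only [Nat.cast_zero, zero_mul] at h2
      have : v = u := le_antisymm (by linarith) h1
      subst this
      simp
    | succ n ih =>
      intro u v h1 h2
      rcases le_or_gt v (u + δ) with h | h
      · exact localExp u v h1 h
      · have e1 := localExp u (u + δ) (by linarith) le_rfl
        have e2 := ih (u + δ) v (by linarith) (by push_cast at h2 ⊢; linarith)
        have : K * (v - u) = K * (u + δ - u) + K * (v - (u + δ)) := by ring
        linarith
  refine ⟨G, K, k, ⟨contT, hlift, contG, hK, hper, hk, ?_⟩⟩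
  intro u v huv
  obtain ⟨n, hn⟩ := exists_nat_gt ((v - u) / δ)
  refine main n u v huv ?_
  rw [div_lt_iff₀ hδpos] at hn
  linarith

end EscAux

/-! ### Derived facts and measure estimates for good lifts -/

namespace EscAux

noncomputable def ginv (G : ℝ → ℝ) : ℝ → ℝ := Function.invFun G

namespace GoodLift

variable {T : 𝕋 → 𝕋} {G : ℝ → ℝ} {K : ℝ} {k : ℤ}

lemma Kpos (h : GoodLift T G K k) : 0 < K := lt_trans one_pos h.hK

lemma mono (h : GoodLift T G K k) : StrictMono G := by
  intro u v huv
  have h1 := h.expand u v huv.le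
  nlinarith [h.Kpos, huv]

lemma surj (h : GoodLift T G K k) : Function.Surjective G := by
  apply h.contG.surjective
  · refine tendsto_atTop_mono' atTop (f₁ := fun t : ℝ => G 0 + K * t) ?_ ?_
    · filter_upwards [eventually_ge_atTop (0:ℝ)] with t ht
      have := h.expand 0 t ht
      show G 0 + K * t ≤ G t
      linarith
    · exact tendsto_atTop_add_const_left _ _ (Tendsto.const_mul_atTop h.Kpos tendsto_id)
  · refine tendsto_atBot_mono' atBot (f₁ := fun t : ℝ => G 0 + K * t) ?_ ?_
    · filter_upwards [eventually_le_atBot (0:ℝ)] with t ht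
      have := h.expand t 0 ht
      show G t ≤ G 0 + K * t
      linarith
    · apply tendsto_atBot_add_const_left
      exact Tendsto.const_mul_atBot h.Kpos tendsto_id

lemma ginv_right (h : GoodLift T G K k) (y : ℝ) : G (ginv G y) = y :=
  Function.rightInverse_invFun h.surj y

lemma ginv_left (h : GoodLift T G K k) (t : ℝ) : ginv G (G t) = t :=
  Function.leftInverse_invFun h.mono.injective t

lemma ginv_lip (h : GoodLift T G K k) (x y : ℝ) :
    |ginv G x - ginv G y| ≤ K⁻¹ * |x - y| := by
  have key : ∀ x y : ℝ, ginv G x ≤ ginv G y → ginv G y - ginv G x ≤ K⁻¹ * (y - x) := by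
    intro x y hxy
    have h1 := h.expand _ _ hxy
    rw [h.ginv_right, h.ginv_right] at h1
    have hK := h.Kpos
    rw [← mul_le_mul_iff_right₀ hK, show K * (K⁻¹ * (y - x)) = (K * K⁻¹) * (y - x) by ring,
      mul_inv_cancel₀ hK.ne', one_mul]
    exact h1
  rcases le_total (ginv G x) (ginv G y) with hc | hc
  · have h1 := key x y hc
    have h4 := h.expand _ _ hc
    rw [h.ginv_right, h.ginv_right] at h4
    have h2 : x ≤ y := by nlinarith [h.Kpos]
    rw [abs_sub_comm, abs_of_nonneg (by linarith : (0:ℝ) ≤ ginv G y - ginv G x),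
      abs_sub_comm, abs_of_nonneg (by linarith : (0:ℝ) ≤ y - x)]
    exact h1
  · have h1 := key y x hc
    have h4 := h.expand _ _ hc
    rw [h.ginv_right, h.ginv_right] at h4
    have h2 : y ≤ x := by nlinarith [h.Kpos]
    rw [abs_of_nonneg (by linarith : (0:ℝ) ≤ ginv G x - ginv G y),
      abs_of_nonneg (by linarith : (0:ℝ) ≤ x - y)]
    exact h1
  -- may need cleanup

lemma vol_image_ginv (h : GoodLift T G K k) (s : Set ℝ) :
    volume (ginv G '' s) ≤ ENNReal.ofReal K⁻¹ * volume s := by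
  have hlip : LipschitzWith (Real.toNNReal K⁻¹) (ginv G) := by
    apply LipschitzWith.of_dist_le_mul
    intro x y
    rw [Real.dist_eq, Real.dist_eq, Real.coe_toNNReal _ (inv_nonneg.mpr h.Kpos.le)]
    exact h.ginv_lip x y
  have hh := hlip.hausdorffMeasure_image_le (by norm_num : (0:ℝ) ≤ 1) s
  rw [MeasureTheory.hausdorffMeasure_real] at hh
  calc volume (ginv G '' s) ≤ (Real.toNNReal K⁻¹ : ℝ≥0∞) ^ (1:ℝ) * volume s := hh
    _ = ENNReal.ofReal K⁻¹ * volume s := by rw [ENNReal.rpow_one]; rfl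

lemma vol_Icc_inter_preimage (h : GoodLift T G K k) {α β : ℝ} (hab : α ≤ β) (Y : Set ℝ) :
    volume (Icc α β ∩ G ⁻¹' Y) ≤ ENNReal.ofReal K⁻¹ * volume (Y ∩ Icc (G α) (G β)) := by
  have hsub : Icc α β ∩ G ⁻¹' Y ⊆ ginv G '' (Y ∩ Icc (G α) (G β)) := by
    rintro t ⟨⟨h1, h2⟩, hY⟩
    exact ⟨G t, ⟨hY, h.mono.monotone h1, h.mono.monotone h2⟩, h.ginv_left t⟩
  exact (measure_mono hsub).trans (h.vol_image_ginv _)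

end GoodLift

end EscAux

/-! ### Measure computations on the circle -/

namespace EscAux

lemma vol_circ {X : Set 𝕋} (hX : MeasurableSet X) (t : ℝ) :
    volume X = volume ((fun x : ℝ => ((x : ℝ) : 𝕋)) ⁻¹' X ∩ Ioc t (t + 1)) :=
  AddCircle.add_projection_respects_measure 1 t hX

lemma vol_point (c : ℝ) : volume ({c} : Set ℝ) = 0 := Real.volume_singleton

namespace GoodLift

variable {T : 𝕋 → 𝕋} {G : ℝ → ℝ} {K : ℝ} {k : ℤ}

lemma preim_lift (h : GoodLift T G K k) (X : Set 𝕋) :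
    (fun x : ℝ => ((x : ℝ) : 𝕋)) ⁻¹' (T ⁻¹' X) = G ⁻¹' ((fun x : ℝ => ((x : ℝ) : 𝕋)) ⁻¹' X) := by
  ext t
  simp only [Set.mem_preimage, h.lift t]

end GoodLift

lemma vol_band {X : Set 𝕋} (hX : MeasurableSet X) (c : ℝ) (n : ℕ) :
    volume ((fun x : ℝ => ((x : ℝ) : 𝕋)) ⁻¹' X ∩ Ioc c (c + n)) ≤ n * volume X := by
  induction n with
  | zero => simp
  | succ n ih =>
    have hsub : (fun x : ℝ => ((x : ℝ) : 𝕋)) ⁻¹' X ∩ Ioc c (c + (n + 1 : ℕ)) ⊆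
        ((fun x : ℝ => ((x : ℝ) : 𝕋)) ⁻¹' X ∩ Ioc c (c + n)) ∪
        ((fun x : ℝ => ((x : ℝ) : 𝕋)) ⁻¹' X ∩ Ioc (c + n) (c + n + 1)) := by
      rintro x ⟨hx, hx1, hx2⟩
      rcases le_or_gt x (c + n) with hc | hc
      · exact Or.inl ⟨hx, hx1, hc⟩
      · refine Or.inr ⟨hx, hc, ?_⟩
        push_cast at hx2
        linarith
    refine (measure_mono hsub).trans ((measure_union_le _ _).trans ?_)
    have heq : volume ((fun x : ℝ => ((x : ℝ) : 𝕋)) ⁻¹' X ∩ Ioc (c + n) (c + n + 1)) = volume X :=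
      (vol_circ hX (c + n)).symm
    rw [heq]
    refine (add_le_add_left ih _).trans ?_
    push_cast
    rw [add_mul, one_mul]

namespace GoodLift

variable {T : 𝕋 → 𝕋} {G : ℝ → ℝ} {K : ℝ} {k : ℤ}

lemma vol_preimage_T_le (h : GoodLift T G K k) {X : Set 𝕋} (hX : MeasurableSet X) :
    volume (T ⁻¹' X) ≤ (k.toNat : ℝ≥0∞) * ENNReal.ofReal K⁻¹ * volume X := by
  have hmX : MeasurableSet (T ⁻¹' X) := hX.preimage h.contT.measurable
  rw [vol_circ hmX 0]
  rw [h.preim_lift X]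
  set S := (fun x : ℝ => ((x : ℝ) : 𝕋)) ⁻¹' X with hS
  have hsub : G ⁻¹' S ∩ Ioc (0:ℝ) (0 + 1) ⊆ Icc (0:ℝ) 1 ∩ G ⁻¹' S := by
    rintro x ⟨hx1, hx2, hx3⟩
    exact ⟨⟨hx2.le, by linarith⟩, hx1⟩
  have hk0 : (0:ℤ) ≤ k := le_trans (by norm_num) h.hk
  have hcast : ((k.toNat : ℕ) : ℝ) = (k : ℝ) := by exact_mod_cast Int.toNat_of_nonneg hk0
  have hG1 : G 1 = G 0 + (k.toNat : ℝ) := by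
    have hp := h.per 0
    rw [zero_add] at hp
    rw [hp, hcast]
  have hstep : volume (Icc (0:ℝ) 1 ∩ G ⁻¹' S) ≤
      ENNReal.ofReal K⁻¹ * volume (S ∩ Icc (G 0) (G 1)) :=
    h.vol_Icc_inter_preimage zero_le_one S
  have hIcc : S ∩ Icc (G 0) (G 1) ⊆ (S ∩ {G 0}) ∪ (S ∩ Ioc (G 0) (G 0 + k.toNat)) := by
    rintro x ⟨hxS, hx1, hx2⟩
    rcases eq_or_lt_of_le hx1 with heq | hlt
    · exact Or.inl ⟨hxS, heq.symm⟩
    · refine Or.inr ⟨hxS, hlt, ?_⟩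
      rw [hG1] at hx2
      exact hx2
  have hband := vol_band hX (G 0) k.toNat
  calc volume (G ⁻¹' S ∩ Ioc (0:ℝ) (0 + 1)) ≤ volume (Icc (0:ℝ) 1 ∩ G ⁻¹' S) :=
        measure_mono hsub
    _ ≤ ENNReal.ofReal K⁻¹ * volume (S ∩ Icc (G 0) (G 1)) := hstep
    _ ≤ ENNReal.ofReal K⁻¹ * (volume (S ∩ {G 0}) + volume (S ∩ Ioc (G 0) (G 0 + k.toNat))) := by
        gcongr
        exact (measure_mono hIcc).trans (measure_union_le _ _)
    _ ≤ ENNReal.ofReal K⁻¹ * (0 + (k.toNat : ℝ≥0∞) * volume X) := by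
        have h0 : volume (S ∩ {G 0}) = 0 :=
          le_antisymm ((measure_mono inter_subset_right).trans_eq (vol_point _)) (zero_le)
        rw [h0]
        gcongr
    _ = (k.toNat : ℝ≥0∞) * ENNReal.ofReal K⁻¹ * volume X := by
        rw [zero_add]; ring

end GoodLift

end EscAux

/-! ### Arcs and flowers -/

namespace EscAux

lemma continuous_coe : Continuous (fun x : ℝ => ((x : ℝ) : 𝕋)) :=
  AddCircle.continuous_mk' 1

lemma mem_arc {aa bb z : 𝕋} :
    z ∈ arc aa bb ↔ ∃ t : ℝ, 0 ≤ t ∧ t ≤ arcLen aa bb ∧ z = ((rep01 aa + t : ℝ) : 𝕋) := by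
  constructor
  · rintro ⟨t, ⟨ht0, ht1⟩, rfl⟩
    exact ⟨t, ht0, ht1, by rw [AddCircle.coe_add, coe_rep01]⟩
  · rintro ⟨t, ht0, ht1, rfl⟩
    exact ⟨t, ⟨ht0, ht1⟩, by rw [AddCircle.coe_add, coe_rep01]⟩

lemma isCompact_arc (aa bb : 𝕋) : IsCompact (arc aa bb) :=
  isCompact_Icc.image (continuous_const.add continuous_coe)

lemma measurableSet_arc (aa bb : 𝕋) : MeasurableSet (arc aa bb) :=
  (isCompact_arc aa bb).isClosed.measurableSet

lemma arcLen_mem (aa bb : 𝕋) : arcLen aa bb ∈ Ico (0:ℝ) 1 := rep01_mem _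

lemma flower_unique_preimage {T τ : 𝕋 → 𝕋} {D : Finset 𝕋} (hcontT : Continuous T)
    (hsel : IsPreimageSelector T τ D) {aa bb : 𝕋}
    (hF : arc aa bb = closure (Set.range τ)) {w : 𝕋} (hw : w ∉ D) {z : 𝕋}
    (hz : z ∈ arc aa bb) (hTz : T z = w) : z = τ w := by
  rw [hF] at hz
  obtain ⟨u, hu, hlim⟩ := mem_closure_iff_seq_limit.mp hz
  choose v hv using hu
  have hTu : Tendsto (fun n => T (u n)) atTop (𝓝 w) := by
    rw [← hTz]
    exact (hcontT.tendsto z).comp hlim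
  have hvw : Tendsto v atTop (𝓝 w) := by
    refine hTu.congr fun n => ?_
    rw [← hv n, hsel.1]
  have hτv : Tendsto (fun n => τ (v n)) atTop (𝓝 (τ w)) :=
    ((hsel.2.1 w hw).tendsto).comp hvw
  have hu' : Tendsto u atTop (𝓝 (τ w)) := hτv.congr fun n => hv n
  exact tendsto_nhds_unique hlim hu'

namespace GoodLift

variable {T : 𝕋 → 𝕋} {G : ℝ → ℝ} {K : ℝ} {k : ℤ}

lemma flower_window (h : GoodLift T G K k) {aa bb : 𝕋} {τ : 𝕋 → 𝕋} {D : Finset 𝕋}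
    (hsel : IsPreimageSelector T τ D)
    (hF : arc aa bb = closure (Set.range τ)) :
    G (rep01 aa + arcLen aa bb) ≤ G (rep01 aa) + 1 := by
  set α := rep01 aa with hα
  set ℓ := arcLen aa bb with hℓdef
  have hℓ1 : ℓ < 1 := (arcLen_mem aa bb).2
  have hℓ0 : 0 ≤ ℓ := (arcLen_mem aa bb).1
  by_contra hcon
  push_neg at hcon
  have hbad : Set.Countable {s : ℝ | ((s : ℝ) : 𝕋) ∈ (D : Set 𝕋)} := by
    have heq : {s : ℝ | ((s : ℝ) : 𝕋) ∈ (D : Set 𝕋)} =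
        ⋃ d ∈ (D : Set 𝕋), {s : ℝ | ((s : ℝ) : 𝕋) = d} := by
      ext s; simp
    rw [heq]
    refine Set.Countable.biUnion D.countable_toSet fun d _ => ?_
    refine Set.Countable.mono ?_ (Set.countable_range fun n : ℤ => rep01 d + n)
    intro s hs
    have hsd : ((s : ℝ) : 𝕋) = ((rep01 d : ℝ) : 𝕋) := by
      rw [coe_rep01]; exact hs
    obtain ⟨n, hn⟩ := coe_eq_coe_iff.mp hsd
    refine ⟨n, ?_⟩
    show rep01 d + (n : ℝ) = s
    linarith
  have hIoo : ¬(Ioo (G α) (G (α + ℓ) - 1) ⊆ {s : ℝ | ((s : ℝ) : 𝕋) ∈ (D : Set 𝕋)}) := by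
    intro hsub
    have h1 : volume (Ioo (G α) (G (α + ℓ) - 1)) = 0 :=
      measure_mono_null hsub (hbad.measure_zero _)
    rw [Real.volume_Ioo] at h1
    have h2 := ENNReal.ofReal_eq_zero.mp h1
    linarith
  obtain ⟨s, hsI, hsD⟩ := Set.not_subset.mp hIoo
  set t1 := ginv G s with ht1def
  set t2 := ginv G (s + 1) with ht2def
  have hG1 : G t1 = s := h.ginv_right s
  have hG2 : G t2 = s + 1 := h.ginv_right _
  have ht1 : α < t1 := h.mono.lt_iff_lt.mp (by rw [hG1]; exact hsI.1)
  have ht2 : t2 < α + ℓ := h.mono.lt_iff_lt.mp (by rw [hG2]; linarith [hsI.2])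
  have ht12 : t1 < t2 := h.mono.lt_iff_lt.mp (by rw [hG1, hG2]; linarith)
  have hz1 : ((t1 : ℝ) : 𝕋) ∈ arc aa bb :=
    mem_arc.mpr ⟨t1 - α, by linarith, by linarith, by rw [show α + (t1 - α) = t1 by ring]⟩
  have hz2 : ((t2 : ℝ) : 𝕋) ∈ arc aa bb :=
    mem_arc.mpr ⟨t2 - α, by linarith, by linarith, by rw [show α + (t2 - α) = t2 by ring]⟩
  have hwD : ((s : ℝ) : 𝕋) ∉ D := by
    intro hmem
    exact hsD (by simpa using hmem)
  have hT1 : T ((t1 : ℝ) : 𝕋) = ((s : ℝ) : 𝕋) := by rw [h.lift, hG1]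
  have hT2 : T ((t2 : ℝ) : 𝕋) = ((s : ℝ) : 𝕋) := by
    rw [h.lift, hG2]
    exact AddCircle.coe_add_period 1 s
  have he1 := flower_unique_preimage h.contT hsel hF hwD hz1 hT1
  have he2 := flower_unique_preimage h.contT hsel hF hwD hz2 hT2
  have hc : ((t1 : ℝ) : 𝕋) = ((t2 : ℝ) : 𝕋) := he1.trans he2.symm
  obtain ⟨n, hn⟩ := coe_eq_coe_iff.mp hc
  have hn0 : n = 0 := by
    have h1 : -1 < (n : ℝ) := by linarith
    have h2 : (n : ℝ) < 1 := by linarith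
    have h1' : (-1 : ℤ) < n := by exact_mod_cast h1
    have h2' : n < 1 := by exact_mod_cast h2
    omega
  rw [hn0] at hn
  push_cast at hn
  linarith

lemma vol_arc_inter_preimage (h : GoodLift T G K k) {aa bb : 𝕋}
    (hwin : G (rep01 aa + arcLen aa bb) ≤ G (rep01 aa) + 1)
    {X : Set 𝕋} (hX : MeasurableSet X) :
    volume (arc aa bb ∩ T ⁻¹' X) ≤ ENNReal.ofReal K⁻¹ * volume X := by
  set α := rep01 aa with hα
  set ℓ := arcLen aa bb with hℓdef
  have hℓ1 : ℓ < 1 := (arcLen_mem aa bb).2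
  have hℓ0 : 0 ≤ ℓ := (arcLen_mem aa bb).1
  set S := (fun x : ℝ => ((x : ℝ) : 𝕋)) ⁻¹' X with hSdef
  have hm : MeasurableSet (arc aa bb ∩ T ⁻¹' X) :=
    (measurableSet_arc aa bb).inter (hX.preimage h.contT.measurable)
  rw [vol_circ hm α]
  have hsub : (fun x : ℝ => ((x : ℝ) : 𝕋)) ⁻¹' (arc aa bb ∩ T ⁻¹' X) ∩ Ioc α (α + 1) ⊆
      (Icc α (α + ℓ) ∩ G ⁻¹' S) ∪ {α + 1} := by
    rintro t ⟨⟨htF, htX⟩, ht1, ht2⟩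
    obtain ⟨u, hu0, hu1, hut⟩ := mem_arc.mp htF
    obtain ⟨n, hn⟩ := coe_eq_coe_iff.mp hut
    have hcase : n = 0 ∨ n = 1 := by
      have h1 : -1 < (n : ℝ) := by linarith
      have h2 : (n : ℝ) ≤ 1 := by linarith
      have h1' : (-1 : ℤ) < n := by exact_mod_cast h1
      have h2' : n ≤ 1 := by exact_mod_cast h2
      omega
    rcases hcase with rfl | rfl
    · push_cast at hn
      refine Or.inl ⟨⟨by linarith, by linarith⟩, ?_⟩
      show ((G t : ℝ) : 𝕋) ∈ X
      rw [← h.lift]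
      exact htX
    · push_cast at hn
      have ht : t = α + 1 := by linarith
      exact Or.inr (by simp [ht])
  calc volume ((fun x : ℝ => ((x : ℝ) : 𝕋)) ⁻¹' (arc aa bb ∩ T ⁻¹' X) ∩ Ioc α (α + 1))
      ≤ volume ((Icc α (α + ℓ) ∩ G ⁻¹' S) ∪ {α + 1}) := measure_mono hsub
    _ ≤ volume (Icc α (α + ℓ) ∩ G ⁻¹' S) + volume ({α + 1} : Set ℝ) := measure_union_le _ _
    _ = volume (Icc α (α + ℓ) ∩ G ⁻¹' S) := by rw [vol_point, add_zero]
    _ ≤ ENNReal.ofReal K⁻¹ * volume (S ∩ Icc (G α) (G (α + ℓ))) :=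
        h.vol_Icc_inter_preimage (by linarith) S
    _ ≤ ENNReal.ofReal K⁻¹ * volume (S ∩ ({G α} ∪ Ioc (G α) (G α + 1))) := by
        gcongr
        rintro x hx
        rcases eq_or_lt_of_le hx.1 with heq | hlt
        · exact Or.inl heq.symm
        · exact Or.inr ⟨hlt, by linarith [hx.2]⟩
    _ ≤ ENNReal.ofReal K⁻¹ * (volume (S ∩ {G α}) + volume (S ∩ Ioc (G α) (G α + 1))) := by
        gcongr
        rw [inter_union_distrib_left]
        exact measure_union_le _ _
    _ ≤ ENNReal.ofReal K⁻¹ * (0 + volume X) := by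
        have h0 : volume (S ∩ {G α}) = 0 :=
          le_antisymm ((measure_mono inter_subset_right).trans_eq (vol_point _)) (zero_le)
        rw [h0]
        gcongr
        exact le_of_eq (vol_circ hX (G α)).symm
    _ = ENNReal.ofReal K⁻¹ * volume X := by rw [zero_add]

end GoodLift

lemma Cn_succ_eq (T : 𝕋 → 𝕋) (F : Set 𝕋) (n : ℕ) :
    {w : 𝕋 | ∀ m ≤ n + 1, T^[m] w ∈ F} = F ∩ T ⁻¹' {w : 𝕋 | ∀ m ≤ n, T^[m] w ∈ F} := by
  ext w
  constructor
  · intro hw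
    refine ⟨hw 0 (Nat.zero_le _), fun m hm => ?_⟩
    rw [← Function.iterate_succ_apply]
    exact hw (m + 1) (by omega)
  · rintro ⟨h0, hrec⟩ m hm
    cases m with
    | zero => simpa using h0
    | succ m =>
      rw [Function.iterate_succ_apply]
      exact hrec m (by omega)

lemma Cn_zero_eq (T : 𝕋 → 𝕋) (F : Set 𝕋) :
    {w : 𝕋 | ∀ m ≤ 0, T^[m] w ∈ F} = F := by
  ext w
  simp

lemma Cn_meas {T : 𝕋 → 𝕋} (hT : Continuous T) {F : Set 𝕋} (hF : MeasurableSet F) (n : ℕ) :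
    MeasurableSet {w : 𝕋 | ∀ m ≤ n, T^[m] w ∈ F} := by
  induction n with
  | zero => rw [Cn_zero_eq]; exact hF
  | succ n ih =>
    rw [Cn_succ_eq]
    exact hF.inter (ih.preimage hT.measurable)

namespace GoodLift

variable {T : 𝕋 → 𝕋} {G : ℝ → ℝ} {K : ℝ} {k : ℤ}

lemma vol_Cn (h : GoodLift T G K k) {aa bb : 𝕋}
    (hwin : G (rep01 aa + arcLen aa bb) ≤ G (rep01 aa) + 1) (n : ℕ) :
    volume {w : 𝕋 | ∀ m ≤ n, T^[m] w ∈ arc aa bb} ≤ ENNReal.ofReal K⁻¹ ^ n := by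
  induction n with
  | zero =>
    rw [Cn_zero_eq, pow_zero]
    calc volume (arc aa bb) ≤ volume (univ : Set 𝕋) := measure_mono (subset_univ _)
      _ = 1 := UnitAddCircle.measure_univ
  | succ n ih =>
    rw [Cn_succ_eq]
    calc volume (arc aa bb ∩ T ⁻¹' {w : 𝕋 | ∀ m ≤ n, T^[m] w ∈ arc aa bb})
        ≤ ENNReal.ofReal K⁻¹ * volume {w : 𝕋 | ∀ m ≤ n, T^[m] w ∈ arc aa bb} :=
          h.vol_arc_inter_preimage hwin (Cn_meas h.contT (measurableSet_arc aa bb) n)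
      _ ≤ ENNReal.ofReal K⁻¹ * ENNReal.ofReal K⁻¹ ^ n := by gcongr
      _ = ENNReal.ofReal K⁻¹ ^ (n + 1) := by rw [pow_succ]; ring

lemma vol_iter_preimage (h : GoodLift T G K k) (m : ℕ) :
    ∀ (S : Set 𝕋), MeasurableSet S →
      volume (T^[m] ⁻¹' S) ≤ ((k.toNat : ℝ≥0∞) * ENNReal.ofReal K⁻¹) ^ m * volume S := by
  induction m with
  | zero => intro S _; simp
  | succ m ih =>
    intro S hS
    have hpre : T^[m + 1] ⁻¹' S = T^[m] ⁻¹' (T ⁻¹' S) := by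
      rw [Function.iterate_succ']
      rfl
    rw [hpre]
    calc volume (T^[m] ⁻¹' (T ⁻¹' S))
        ≤ ((k.toNat : ℝ≥0∞) * ENNReal.ofReal K⁻¹) ^ m * volume (T ⁻¹' S) :=
          ih _ (hS.preimage h.contT.measurable)
      _ ≤ ((k.toNat : ℝ≥0∞) * ENNReal.ofReal K⁻¹) ^ m *
            ((k.toNat : ℝ≥0∞) * ENNReal.ofReal K⁻¹ * volume S) := by
          gcongr
          exact h.vol_preimage_T_le hS
      _ = ((k.toNat : ℝ≥0∞) * ENNReal.ofReal K⁻¹) ^ (m + 1) * volume S := by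
          rw [pow_succ]; ring

end GoodLift

end EscAux

/-! ### Arc perturbation estimates -/

namespace EscAux

lemma arcLen_pos_of_flower {T τ : 𝕋 → 𝕋} {D : Finset 𝕋} {aa bb : 𝕋}
    (hsel : IsPreimageSelector T τ D) (hF : arc aa bb = closure (Set.range τ)) :
    0 < arcLen aa bb := by
  rcases eq_or_lt_of_le (arcLen_mem aa bb).1 with heq | h
  · exfalso
    have harc : arc aa bb = {aa} := by
      ext z
      rw [mem_arc, mem_singleton_iff]
      constructor
      · rintro ⟨t, ht0, ht1, rfl⟩
        have ht : t = 0 := le_antisymm (by rw [← heq] at ht1; exact ht1) ht0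
        rw [ht, add_zero, coe_rep01]
      · rintro rfl
        exact ⟨0, le_rfl, by rw [← heq], by rw [add_zero, coe_rep01]⟩
    have hsub : Set.range τ ⊆ ({aa} : Set 𝕋) := by
      rw [hF] at harc
      exact subset_trans subset_closure harc.subset
    have hall : ∀ x : 𝕋, x = T aa := by
      intro x
      have h1 : τ x = aa := mem_singleton_iff.mp (hsub (Set.mem_range_self x))
      rw [← hsel.1 x, h1]
    have h1 := hall 0
    have h2 := hall (((1 : ℝ) / 2 : ℝ) : 𝕋)
    rw [← h2] at h1
    have habs2 : |(1 : ℝ) / 2| = 1 / 2 := abs_of_nonneg (by norm_num)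
    have h3 : ‖(((1 : ℝ) / 2 : ℝ) : 𝕋)‖ = 1 / 2 := by
      rw [norm_coe_eq (le_of_eq habs2), habs2]
    rw [← h1] at h3
    simp at h3
  · exact h

lemma continuousAt_arcLen {a b : 𝕋 → 𝕋} (hca : Continuous a) (hcb : Continuous b) {γ₀ : 𝕋}
    (hne : b γ₀ - a γ₀ ≠ 0) : ContinuousAt (fun γ => arcLen (a γ) (b γ)) γ₀ := by
  have h1 : ContinuousAt (fun z : 𝕋 => rep01 z) (b γ₀ - a γ₀) := by
    have h2 : ContinuousAt (AddCircle.equivIco 1 0) (b γ₀ - a γ₀) :=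
      AddCircle.continuousAt_equivIco 1 0 (by simpa using hne)
    exact continuous_subtype_val.continuousAt.comp h2
  have h2 : ContinuousAt (fun γ => b γ - a γ) γ₀ := (hcb.sub hca).continuousAt
  show ContinuousAt (fun γ => rep01 (b γ - a γ)) γ₀
  have h3 : Tendsto (fun γ => rep01 (b γ - a γ)) (𝓝 γ₀) (𝓝 (rep01 (b γ₀ - a γ₀))) :=
    Filter.Tendsto.comp (g := fun z : 𝕋 => rep01 z) h1 h2
  exact h3

lemma vol_arc_diff (a1 b1 a2 b2 : 𝕋) :
    volume (arc a1 b1 \ arc a2 b2) ≤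
      ENNReal.ofReal (2 * dist a1 a2 + |arcLen a1 b1 - arcLen a2 b2|) := by
  set ℓ1 := arcLen a1 b1 with hℓ1def
  set ℓ2 := arcLen a2 b2 with hℓ2def
  set α1 := rep01 a1 with hα1def
  set α2 := rep01 a2 with hα2def
  set δ := repSym (a1 - a2) with hδdef
  have hkey : ((α2 + δ : ℝ) : 𝕋) = a1 := by
    rw [AddCircle.coe_add, coe_rep01, coe_repSym, add_sub_cancel]
  have habs : |δ| = dist a1 a2 := by
    rw [hδdef, abs_repSym, dist_eq_norm]
  have hl10 : 0 ≤ ℓ1 := (arcLen_mem a1 b1).1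
  have hl11 : ℓ1 < 1 := (arcLen_mem a1 b1).2
  have hl20 : 0 ≤ ℓ2 := (arcLen_mem a2 b2).1
  have hmeas : MeasurableSet (arc a1 b1 \ arc a2 b2) :=
    (measurableSet_arc _ _).diff (measurableSet_arc _ _)
  rw [vol_circ hmeas (α2 + δ)]
  have hsub : (fun x : ℝ => ((x : ℝ) : 𝕋)) ⁻¹' (arc a1 b1 \ arc a2 b2) ∩
        Ioc (α2 + δ) (α2 + δ + 1) ⊆
      (Ico (α2 + δ) α2 ∪ Ioc (α2 + ℓ2) (α2 + δ + ℓ1)) ∪ {α2 + δ + 1} := by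
    rintro t ⟨⟨htF, htF'⟩, ht1, ht2⟩
    obtain ⟨u, hu0, hu1, hut⟩ := mem_arc.mp htF
    have hut2 : ((t : ℝ) : 𝕋) = ((α2 + δ + u : ℝ) : 𝕋) := by
      have e1 : ((rep01 a1 + u : ℝ) : 𝕋) = a1 + ((u : ℝ) : 𝕋) := by
        rw [AddCircle.coe_add, coe_rep01]
      have e2 : ((α2 + δ + u : ℝ) : 𝕋) = a1 + ((u : ℝ) : 𝕋) := by
        rw [AddCircle.coe_add, hkey]
      exact hut.trans (e1.trans e2.symm)
    obtain ⟨n, hn⟩ := coe_eq_coe_iff.mp hut2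
    have hcase : n = 0 ∨ n = 1 := by
      have hn1 : -1 < (n : ℝ) := by linarith
      have hn2 : (n : ℝ) ≤ 1 := by linarith
      have hn1' : (-1 : ℤ) < n := by exact_mod_cast hn1
      have hn2' : n ≤ 1 := by exact_mod_cast hn2
      omega
    have hs : t - α2 < 0 ∨ ℓ2 < t - α2 := by
      by_contra hcon
      push_neg at hcon
      exact htF' (mem_arc.mpr ⟨t - α2, by linarith [hcon.1], hcon.2,
        by rw [show rep01 a2 + (t - α2) = t by rw [← hα2def]; ring]⟩)
    rcases hcase with rfl | rfl
    · push_cast at hn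
      rcases hs with hs | hs
      · exact Or.inl (Or.inl ⟨by linarith, by linarith⟩)
      · exact Or.inl (Or.inr ⟨by linarith, by linarith⟩)
    · push_cast at hn
      have ht : t = α2 + δ + 1 := by linarith
      exact Or.inr (by simp [ht])
  calc volume ((fun x : ℝ => ((x : ℝ) : 𝕋)) ⁻¹' (arc a1 b1 \ arc a2 b2) ∩
        Ioc (α2 + δ) (α2 + δ + 1))
      ≤ volume ((Ico (α2 + δ) α2 ∪ Ioc (α2 + ℓ2) (α2 + δ + ℓ1)) ∪ ({α2 + δ + 1} : Set ℝ)) :=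
        measure_mono hsub
    _ ≤ volume (Ico (α2 + δ) α2 ∪ Ioc (α2 + ℓ2) (α2 + δ + ℓ1)) +
          volume ({α2 + δ + 1} : Set ℝ) := measure_union_le _ _
    _ = volume (Ico (α2 + δ) α2 ∪ Ioc (α2 + ℓ2) (α2 + δ + ℓ1)) := by rw [vol_point, add_zero]
    _ ≤ volume (Ico (α2 + δ) α2) + volume (Ioc (α2 + ℓ2) (α2 + δ + ℓ1)) := measure_union_le _ _
    _ = ENNReal.ofReal (α2 - (α2 + δ)) + ENNReal.ofReal (α2 + δ + ℓ1 - (α2 + ℓ2)) := by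
        rw [Real.volume_Ico, Real.volume_Ioc]
    _ ≤ ENNReal.ofReal |δ| + ENNReal.ofReal (|δ| + |ℓ1 - ℓ2|) := by
        gcongr
        · rw [show α2 - (α2 + δ) = -δ by ring]
          exact neg_le_abs δ
        · rw [show α2 + δ + ℓ1 - (α2 + ℓ2) = δ + (ℓ1 - ℓ2) by ring]
          have h1 : δ ≤ |δ| := le_abs_self δ
          have h2 : ℓ1 - ℓ2 ≤ |ℓ1 - ℓ2| := le_abs_self _
          linarith
    _ = ENNReal.ofReal (|δ| + (|δ| + |ℓ1 - ℓ2|)) :=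
        (ENNReal.ofReal_add (abs_nonneg δ) (by positivity)).symm
    _ ≤ ENNReal.ofReal (2 * dist a1 a2 + |ℓ1 - ℓ2|) := by
        rw [habs]
        apply ENNReal.ofReal_le_ofReal
        linarith

lemma Cn_diff_subset (T : 𝕋 → 𝕋) (F F' : Set 𝕋) (n : ℕ) :
    {w : 𝕋 | ∀ m ≤ n, T^[m] w ∈ F} \ {w : 𝕋 | ∀ m ≤ n, T^[m] w ∈ F'} ⊆
      ⋃ m ∈ Finset.range (n + 1), T^[m] ⁻¹' (F \ F') := by
  rintro w ⟨hw, hw'⟩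
  simp only [mem_setOf_eq, not_forall] at hw'
  obtain ⟨m, hm, hmem⟩ := hw'
  exact Set.mem_biUnion (Finset.mem_range.mpr (by omega)) ⟨hw m hm, hmem⟩

namespace GoodLift

variable {T : 𝕋 → 𝕋} {G : ℝ → ℝ} {K : ℝ} {k : ℤ}

lemma vol_Cn_diff (h : GoodLift T G K k) {F F' : Set 𝕋} (hF : MeasurableSet F)
    (hF' : MeasurableSet F') (n : ℕ) :
    volume ({w : 𝕋 | ∀ m ≤ n, T^[m] w ∈ F} \ {w : 𝕋 | ∀ m ≤ n, T^[m] w ∈ F'}) ≤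
      (∑ m ∈ Finset.range (n + 1), ((k.toNat : ℝ≥0∞) * ENNReal.ofReal K⁻¹) ^ m) *
        volume (F \ F') := by
  refine (measure_mono (Cn_diff_subset T F F' n)).trans ?_
  refine (measure_biUnion_finset_le _ _).trans ?_
  rw [Finset.sum_mul]
  refine Finset.sum_le_sum fun m _ => ?_
  exact h.vol_iter_preimage m _ (hF.diff hF')

end GoodLift

end EscAux

/-! ### The derivative function and integral estimates -/

namespace EscAux

lemma derivCirc_eq (f : 𝕋 → ℝ) (z : 𝕋) :
    derivCirc f z = deriv (fun s : ℝ => f ((s : ℝ) : 𝕋)) (rep01 z) := by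
  show deriv (fun t : ℝ => f (z + ((t : ℝ) : 𝕋))) 0 = _
  have hfun : (fun t : ℝ => f (z + ((t : ℝ) : 𝕋))) =
      fun t : ℝ => (fun s : ℝ => f ((s : ℝ) : 𝕋)) (rep01 z + t) := by
    funext t
    simp only []
    congr 1
    rw [AddCircle.coe_add, coe_rep01]
  rw [hfun]
  have h := deriv_comp_const_add (f := fun s : ℝ => f ((s : ℝ) : 𝕋)) (a := rep01 z) (x := 0)
  rw [add_zero] at h
  exact h

lemma measurable_rep01 : Measurable rep01 := by
  have h1 : Measurable (AddCircle.measurableEquivIco (1:ℝ) 0) :=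
    (AddCircle.measurableEquivIco (1:ℝ) 0).measurable
  exact measurable_subtype_coe.comp h1

lemma measurable_derivCirc (f : 𝕋 → ℝ) : Measurable (derivCirc f) := by
  have h1 : Measurable (deriv (fun s : ℝ => f ((s : ℝ) : 𝕋))) := measurable_deriv _
  have h2 : derivCirc f = fun z => deriv (fun s : ℝ => f ((s : ℝ) : 𝕋)) (rep01 z) :=
    funext (derivCirc_eq f)
  rw [h2]
  exact h1.comp measurable_rep01

lemma abs_derivCirc_le {f : 𝕋 → ℝ} {C : ℝ≥0} (hf : LipschitzWith C f) (z : 𝕋) :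
    |derivCirc f z| ≤ C := by
  set g : ℝ → ℝ := fun t => f (z + ((t : ℝ) : 𝕋)) with hg
  have hgl : LipschitzWith C g := by
    refine LipschitzWith.of_dist_le_mul fun t s => ?_
    calc dist (g t) (g s) ≤ C * dist (z + ((t : ℝ) : 𝕋)) (z + ((s : ℝ) : 𝕋)) :=
          hf.dist_le_mul _ _
      _ = C * dist ((t : ℝ) : 𝕋) ((s : ℝ) : 𝕋) := by rw [dist_add_left]
      _ ≤ C * |t - s| := by
          have := dist_coe_le t s
          gcongr
      _ = C * dist t s := by rw [Real.dist_eq]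
  have hdc : derivCirc f z = deriv g 0 := rfl
  by_cases hdiff : DifferentiableAt ℝ g 0
  · have hfd : ‖fderiv ℝ g 0‖ ≤ C := norm_fderiv_le_of_lipschitz ℝ hgl
    calc |derivCirc f z| = ‖(fderiv ℝ g 0) 1‖ := by
          rw [hdc, ← fderiv_apply_one_eq_deriv]; rfl
      _ ≤ ‖fderiv ℝ g 0‖ * ‖(1:ℝ)‖ := (fderiv ℝ g 0).le_opNorm 1
      _ ≤ (C : ℝ) * 1 := by
          rw [norm_one]
          gcongr
      _ = C := mul_one _
  · rw [hdc, deriv_zero_of_not_differentiableAt hdiff]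
    simp

lemma integrable_mul_indicator {f' : 𝕋 → ℝ} {C : ℝ} (hmeas : Measurable f')
    (hC : ∀ z, |f' z| ≤ C) {A : Set 𝕋} (hA : MeasurableSet A) :
    Integrable (fun z => f' z * A.indicator (fun _ => (1:ℝ)) z) := by
  refine (integrable_const C).mono' ?_ ?_
  · exact (hmeas.mul (measurable_const.indicator hA)).aestronglyMeasurable
  · refine Filter.Eventually.of_forall fun z => ?_
    by_cases hz : z ∈ A
    · simp only [Set.indicator_of_mem hz, mul_one, Real.norm_eq_abs]
      exact hC z
    · simp only [Set.indicator_of_notMem hz, mul_zero, norm_zero]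
      exact le_trans (abs_nonneg _) (hC z)

lemma abs_integral_mul_indicator_le {f' : 𝕋 → ℝ} {C : ℝ} (hmeas : Measurable f')
    (hC : ∀ z, |f' z| ≤ C) {A : Set 𝕋} (hA : MeasurableSet A) :
    |∫ z : 𝕋, f' z * A.indicator (fun _ => (1:ℝ)) z| ≤ C * (volume A).toReal := by
  have h1 : ‖∫ z : 𝕋, f' z * A.indicator (fun _ => (1:ℝ)) z‖ ≤
      ∫ z : 𝕋, ‖f' z * A.indicator (fun _ => (1:ℝ)) z‖ := norm_integral_le_integral_norm _
  rw [Real.norm_eq_abs] at h1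
  refine h1.trans ?_
  have h2 : ∫ z : 𝕋, ‖f' z * A.indicator (fun _ => (1:ℝ)) z‖ ≤
      ∫ z : 𝕋, A.indicator (fun _ => C) z := by
    refine integral_mono (integrable_mul_indicator hmeas hC hA).norm
      ((integrable_const C).indicator hA) fun z => ?_
    by_cases hz : z ∈ A
    · simp only [Set.indicator_of_mem hz, mul_one, Real.norm_eq_abs]
      exact hC z
    · simp only [Set.indicator_of_notMem hz, mul_zero, norm_zero]
      exact le_refl 0
  refine h2.trans ?_
  rw [integral_indicator_const _ hA, smul_eq_mul, mul_comm]
  exact le_rfl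

lemma abs_integral_mul_indicator_sub_le {f' : 𝕋 → ℝ} {C : ℝ} (hmeas : Measurable f')
    (hC : ∀ z, |f' z| ≤ C) {A B : Set 𝕋} (hA : MeasurableSet A) (hB : MeasurableSet B) :
    |(∫ z : 𝕋, f' z * A.indicator (fun _ => (1:ℝ)) z) -
      ∫ z : 𝕋, f' z * B.indicator (fun _ => (1:ℝ)) z| ≤
      C * ((volume (A \ B)).toReal + (volume (B \ A)).toReal) := by
  have hC0 : 0 ≤ C := le_trans (abs_nonneg _) (hC 0)
  have hiA := integrable_mul_indicator hmeas hC hA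
  have hiB := integrable_mul_indicator hmeas hC hB
  rw [← integral_sub hiA hiB]
  have h1 : ‖∫ z : 𝕋, (f' z * A.indicator (fun _ => (1:ℝ)) z -
      f' z * B.indicator (fun _ => (1:ℝ)) z)‖ ≤
      ∫ z : 𝕋, ‖f' z * A.indicator (fun _ => (1:ℝ)) z -
        f' z * B.indicator (fun _ => (1:ℝ)) z‖ := norm_integral_le_integral_norm _
  rw [Real.norm_eq_abs] at h1
  refine h1.trans ?_
  have h2 : ∫ z : 𝕋, ‖f' z * A.indicator (fun _ => (1:ℝ)) z -
      f' z * B.indicator (fun _ => (1:ℝ)) z‖ ≤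
      ∫ z : 𝕋, ((A \ B).indicator (fun _ => C) z + (B \ A).indicator (fun _ => C) z) := by
    refine integral_mono (hiA.sub hiB).norm
      (((integrable_const C).indicator (hA.diff hB)).add
        ((integrable_const C).indicator (hB.diff hA))) fun z => ?_
    by_cases hzA : z ∈ A <;> by_cases hzB : z ∈ B
    · have d1 : z ∉ A \ B := fun h => h.2 hzB
      have d2 : z ∉ B \ A := fun h => h.2 hzA
      simp [Set.indicator_of_mem hzA, Set.indicator_of_mem hzB,
        Set.indicator_of_notMem d1, Set.indicator_of_notMem d2]
    · have d1 : z ∈ A \ B := ⟨hzA, hzB⟩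
      have d2 : z ∉ B \ A := fun h => hzB h.1
      simp only [Set.indicator_of_mem hzA, Set.indicator_of_notMem hzB,
        Set.indicator_of_mem d1, Set.indicator_of_notMem d2, mul_one, mul_zero, sub_zero,
        add_zero, Real.norm_eq_abs]
      exact hC z
    · have d1 : z ∉ A \ B := fun h => hzA h.1
      have d2 : z ∈ B \ A := ⟨hzB, hzA⟩
      simp only [Set.indicator_of_notMem hzA, Set.indicator_of_mem hzB,
        Set.indicator_of_notMem d1, Set.indicator_of_mem d2, mul_one, mul_zero, zero_sub,
        zero_add, Real.norm_eq_abs, abs_neg]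
      exact hC z
    · have d1 : z ∉ A \ B := fun h => hzA h.1
      have d2 : z ∉ B \ A := fun h => hzB h.1
      simp [Set.indicator_of_notMem hzA, Set.indicator_of_notMem hzB,
        Set.indicator_of_notMem d1, Set.indicator_of_notMem d2]
  refine h2.trans ?_
  rw [integral_add ((integrable_const C).indicator (hA.diff hB))
    ((integrable_const C).indicator (hB.diff hA)),
    integral_indicator_const _ (hA.diff hB), integral_indicator_const _ (hB.diff hA),
    smul_eq_mul, smul_eq_mul]
  simp only [Measure.real]
  ring_nf
  exact le_of_eq (by ring)

end EscAux

namespace EscAux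

lemma rep01_zero : rep01 (0 : 𝕋) = 0 := by
  have h0 : ((0 : ℝ) : 𝕋) = (0 : 𝕋) := rfl
  rw [← h0]
  exact rep01_coe ⟨le_rfl, by norm_num⟩

end EscAux

open EscAux in
theorem integral_deriv_escapeTime_continuous'
    (T : 𝕋 → 𝕋) (hT : OPLExpanding T)
    (f : 𝕋 → ℝ) (hf : LipschitzReal f)
    (a b : 𝕋 → 𝕋)
    (ha : Continuous a ∧ Function.Bijective a ∧ HasDegree a 1)
    (hb : Continuous b ∧ Function.Bijective b ∧ HasDegree b 1)
    (hfam : ∀ γ : 𝕋, IsPFlower T 1 (arc (a γ) (b γ)))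
    (hall : ∀ F : Set 𝕋, IsPFlower T 1 F → ∃ γ : 𝕋, F = arc (a γ) (b γ)) :
    Continuous (fun γ : 𝕋 => ∫ z : 𝕋, derivCirc f z * escapeTime T (arc (a γ) (b γ)) z) := by
  classical
  obtain ⟨G, K, k, hG⟩ := exists_goodLift hT
  obtain ⟨Cf, hCf⟩ := hf
  have hKpos := hG.Kpos
  have hKinv0 : (0:ℝ) ≤ K⁻¹ := inv_nonneg.mpr hKpos.le
  have hKinv1 : K⁻¹ < 1 := inv_lt_one_of_one_lt₀ hG.hK
  have hwin : ∀ γ : 𝕋, G (rep01 (a γ) + arcLen (a γ) (b γ)) ≤ G (rep01 (a γ)) + 1 := by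
    intro γ
    obtain ⟨_, τ, D, hsel, hcard, hFeq⟩ := hfam γ
    exact hG.flower_window hsel hFeq
  have hposlen : ∀ γ : 𝕋, 0 < arcLen (a γ) (b γ) := by
    intro γ
    obtain ⟨_, τ, D, hsel, hcard, hFeq⟩ := hfam γ
    exact arcLen_pos_of_flower hsel hFeq
  have hmeasf' : Measurable (derivCirc f) := measurable_derivCirc f
  have hbound : ∀ z, |derivCirc f z| ≤ (Cf : ℝ) := fun z => abs_derivCirc_le hCf z
  have hCnmeas : ∀ (γ : 𝕋) (n : ℕ),
      MeasurableSet {w : 𝕋 | ∀ m ≤ n, T^[m] w ∈ arc (a γ) (b γ)} := fun γ n =>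
    Cn_meas hG.contT (measurableSet_arc _ _) n
  have hCnvol : ∀ (γ : 𝕋) (n : ℕ),
      volume {w : 𝕋 | ∀ m ≤ n, T^[m] w ∈ arc (a γ) (b γ)} ≤ ENNReal.ofReal K⁻¹ ^ n :=
    fun γ n => hG.vol_Cn (hwin γ) n
  set g : 𝕋 → ℕ → ℝ := fun γ n => ∫ z : 𝕋, derivCirc f z *
    ({w : 𝕋 | ∀ m ≤ n, T^[m] w ∈ arc (a γ) (b γ)}).indicator (fun _ => (1:ℝ)) z with hgdef
  -- Step 1: representation as a series
  have hrep : ∀ γ : 𝕋,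
      (∫ z : 𝕋, derivCirc f z * escapeTime T (arc (a γ) (b γ)) z) = ∑' n : ℕ, g γ n := by
    intro γ
    have h1 : ∀ z : 𝕋, derivCirc f z * escapeTime T (arc (a γ) (b γ)) z =
        ∑' n : ℕ, derivCirc f z *
          ({w : 𝕋 | ∀ m ≤ n, T^[m] w ∈ arc (a γ) (b γ)}).indicator (fun _ => (1:ℝ)) z := by
      intro z
      have h0 : escapeTime T (arc (a γ) (b γ)) z = ∑' n : ℕ,
          ({w : 𝕋 | ∀ m ≤ n, T^[m] w ∈ arc (a γ) (b γ)}).indicator (fun _ => (1:ℝ)) z := rfl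
      rw [h0, tsum_mul_left]
    have h2 : (fun z : 𝕋 => derivCirc f z * escapeTime T (arc (a γ) (b γ)) z) =
        fun z : 𝕋 => ∑' n : ℕ, derivCirc f z *
          ({w : 𝕋 | ∀ m ≤ n, T^[m] w ∈ arc (a γ) (b γ)}).indicator (fun _ => (1:ℝ)) z :=
      funext h1
    rw [h2]
    refine integral_tsum (fun n =>
      (hmeasf'.mul (measurable_const.indicator (hCnmeas γ n))).aestronglyMeasurable) ?_
    have hb1 : ∀ n : ℕ, (∫⁻ z : 𝕋, ‖derivCirc f z *
        ({w : 𝕋 | ∀ m ≤ n, T^[m] w ∈ arc (a γ) (b γ)}).indicator (fun _ => (1:ℝ)) z‖₊) ≤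
        (Cf : ℝ≥0∞) * ENNReal.ofReal K⁻¹ ^ n := by
      intro n
      have hpt : ∀ z : 𝕋, (‖derivCirc f z *
          ({w : 𝕋 | ∀ m ≤ n, T^[m] w ∈ arc (a γ) (b γ)}).indicator (fun _ => (1:ℝ)) z‖₊ : ℝ≥0∞) ≤
          ({w : 𝕋 | ∀ m ≤ n, T^[m] w ∈ arc (a γ) (b γ)}).indicator (fun _ => (Cf : ℝ≥0∞)) z := by
        intro z
        by_cases hz : z ∈ {w : 𝕋 | ∀ m ≤ n, T^[m] w ∈ arc (a γ) (b γ)}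
        · rw [Set.indicator_of_mem hz, Set.indicator_of_mem hz, mul_one]
          rw [show ((‖derivCirc f z‖₊ : ℝ≥0) : ℝ≥0∞) = ENNReal.ofReal ‖derivCirc f z‖ from
              (ofReal_norm _).symm, Real.norm_eq_abs]
          rw [show ((Cf : ℝ≥0) : ℝ≥0∞) = ENNReal.ofReal (Cf : ℝ) from
            (ENNReal.ofReal_coe_nnreal).symm]
          exact ENNReal.ofReal_le_ofReal (hbound z)
        · rw [Set.indicator_of_notMem hz, Set.indicator_of_notMem hz, mul_zero]
          simp
      calc (∫⁻ z : 𝕋, ‖derivCirc f z *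
            ({w : 𝕋 | ∀ m ≤ n, T^[m] w ∈ arc (a γ) (b γ)}).indicator (fun _ => (1:ℝ)) z‖₊)
          ≤ ∫⁻ z : 𝕋, ({w : 𝕋 | ∀ m ≤ n, T^[m] w ∈ arc (a γ) (b γ)}).indicator
              (fun _ => (Cf : ℝ≥0∞)) z := lintegral_mono hpt
        _ = (Cf : ℝ≥0∞) * volume {w : 𝕋 | ∀ m ≤ n, T^[m] w ∈ arc (a γ) (b γ)} :=
            lintegral_indicator_const (hCnmeas γ n) _
        _ ≤ (Cf : ℝ≥0∞) * ENNReal.ofReal K⁻¹ ^ n := by gcongr; exact hCnvol γ n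
    refine ne_of_lt (lt_of_le_of_lt (ENNReal.tsum_le_tsum hb1) ?_)
    rw [ENNReal.tsum_mul_left, ENNReal.tsum_geometric]
    refine ENNReal.mul_lt_top ENNReal.coe_lt_top ?_
    rw [ENNReal.inv_lt_top]
    refine tsub_pos_of_lt ?_
    exact ENNReal.ofReal_lt_one.mpr hKinv1
  -- Step 2: uniform geometric bound
  have hgb : ∀ (n : ℕ) (γ : 𝕋), ‖g γ n‖ ≤ (Cf : ℝ) * K⁻¹ ^ n := by
    intro n γ
    rw [hgdef, Real.norm_eq_abs]
    refine (abs_integral_mul_indicator_le hmeasf' hbound (hCnmeas γ n)).trans ?_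
    have h1 : (volume {w : 𝕋 | ∀ m ≤ n, T^[m] w ∈ arc (a γ) (b γ)}).toReal ≤ K⁻¹ ^ n := by
      have h2 := ENNReal.toReal_mono (ENNReal.pow_ne_top ENNReal.ofReal_ne_top) (hCnvol γ n)
      rw [ENNReal.toReal_pow, ENNReal.toReal_ofReal hKinv0] at h2
      exact h2
    exact mul_le_mul_of_nonneg_left h1 Cf.coe_nonneg
  -- Step 3: continuity of each term
  have hgc : ∀ n : ℕ, Continuous fun γ => g γ n := by
    intro n
    rw [continuous_iff_continuousAt]
    intro γ₀
    have hne : b γ₀ - a γ₀ ≠ 0 := by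
      intro h0
      refine (hposlen γ₀).ne' ?_
      show arcLen (a γ₀) (b γ₀) = 0
      rw [arcLen, h0, rep01_zero]
    set Mn : ℝ≥0∞ := ∑ m ∈ Finset.range (n + 1),
      ((k.toNat : ℝ≥0∞) * ENNReal.ofReal K⁻¹) ^ m with hMn
    have hMfin : Mn ≠ ⊤ := by
      rw [hMn]
      refine (ENNReal.sum_lt_top.mpr fun m _ => ?_).ne
      exact ENNReal.pow_lt_top
        (ENNReal.mul_lt_top (ENNReal.natCast_lt_top _) ENNReal.ofReal_lt_top)
    set ψ : 𝕋 → ℝ := fun γ =>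
      2 * dist (a γ) (a γ₀) + |arcLen (a γ) (b γ) - arcLen (a γ₀) (b γ₀)| with hψdef
    have hψ0 : ∀ γ, 0 ≤ ψ γ := fun γ => by positivity
    have hkey : ∀ γ, dist (g γ n) (g γ₀ n) ≤
        (Cf : ℝ) * (Mn.toReal * ψ γ + Mn.toReal * ψ γ) := by
      intro γ
      rw [hgdef, Real.dist_eq]
      refine (abs_integral_mul_indicator_sub_le hmeasf' hbound
        (hCnmeas γ n) (hCnmeas γ₀ n)).trans ?_
      have hd1 : volume ({w : 𝕋 | ∀ m ≤ n, T^[m] w ∈ arc (a γ) (b γ)} \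
          {w : 𝕋 | ∀ m ≤ n, T^[m] w ∈ arc (a γ₀) (b γ₀)}) ≤ Mn * ENNReal.ofReal (ψ γ) := by
        refine (hG.vol_Cn_diff (measurableSet_arc _ _) (measurableSet_arc _ _) n).trans ?_
        rw [← hMn]
        gcongr
        exact vol_arc_diff _ _ _ _
      have hd2 : volume ({w : 𝕋 | ∀ m ≤ n, T^[m] w ∈ arc (a γ₀) (b γ₀)} \
          {w : 𝕋 | ∀ m ≤ n, T^[m] w ∈ arc (a γ) (b γ)}) ≤ Mn * ENNReal.ofReal (ψ γ) := by
        refine (hG.vol_Cn_diff (measurableSet_arc _ _) (measurableSet_arc _ _) n).trans ?_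
        rw [← hMn]
        gcongr
        refine (vol_arc_diff _ _ _ _).trans ?_
        apply ENNReal.ofReal_le_ofReal
        rw [hψdef]
        rw [dist_comm, abs_sub_comm]
      have hfin2 : Mn * ENNReal.ofReal (ψ γ) ≠ ⊤ := ENNReal.mul_ne_top hMfin ENNReal.ofReal_ne_top
      have ht1 : (volume ({w : 𝕋 | ∀ m ≤ n, T^[m] w ∈ arc (a γ) (b γ)} \
          {w : 𝕋 | ∀ m ≤ n, T^[m] w ∈ arc (a γ₀) (b γ₀)})).toReal ≤ Mn.toReal * ψ γ := by
        refine (ENNReal.toReal_mono hfin2 hd1).trans ?_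
        rw [ENNReal.toReal_mul, ENNReal.toReal_ofReal (hψ0 γ)]
      have ht2 : (volume ({w : 𝕋 | ∀ m ≤ n, T^[m] w ∈ arc (a γ₀) (b γ₀)} \
          {w : 𝕋 | ∀ m ≤ n, T^[m] w ∈ arc (a γ) (b γ)})).toReal ≤ Mn.toReal * ψ γ := by
        refine (ENNReal.toReal_mono hfin2 hd2).trans ?_
        rw [ENNReal.toReal_mul, ENNReal.toReal_ofReal (hψ0 γ)]
      exact mul_le_mul_of_nonneg_left (add_le_add ht1 ht2) Cf.coe_nonneg
    rw [ContinuousAt, tendsto_iff_dist_tendsto_zero]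
    refine squeeze_zero (fun γ => dist_nonneg) hkey ?_
    have h1 : Tendsto (fun γ => dist (a γ) (a γ₀)) (𝓝 γ₀) (𝓝 0) := by
      have h2 : Continuous fun γ => dist (a γ) (a γ₀) := ha.1.dist continuous_const
      have h3 := h2.tendsto γ₀
      simpa using h3
    have h2 : Tendsto (fun γ => |arcLen (a γ) (b γ) - arcLen (a γ₀) (b γ₀)|) (𝓝 γ₀) (𝓝 0) := by
      have h3 := continuousAt_arcLen ha.1 hb.1 hne
      have h4 : Tendsto (fun γ => arcLen (a γ) (b γ) - arcLen (a γ₀) (b γ₀)) (𝓝 γ₀) (𝓝 0) := by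
        simpa using h3.sub_const (arcLen (a γ₀) (b γ₀))
      simpa using h4.abs
    have hψt : Tendsto ψ (𝓝 γ₀) (𝓝 0) := by
      have h5 := (h1.const_mul (2:ℝ)).add h2
      rw [hψdef]
      simpa using h5
    have h6 := ((hψt.const_mul Mn.toReal).add (hψt.const_mul Mn.toReal)).const_mul (Cf : ℝ)
    simpa using h6
  -- Step 4: uniform convergence and conclusion
  have hsum : Summable (fun n : ℕ => (Cf : ℝ) * K⁻¹ ^ n) :=
    (summable_geometric_of_lt_one hKinv0 hKinv1).mul_left _
  have hconv : TendstoUniformly (fun N γ => ∑ n ∈ Finset.range N, g γ n)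
      (fun γ => ∑' n, g γ n) atTop :=
    tendstoUniformly_tsum_nat hsum hgb
  have hcont : Continuous fun γ => ∑' n, g γ n :=
    hconv.continuous (Filter.Eventually.of_forall fun N =>
      continuous_finset_sum _ fun n _ => hgc n).frequently
  have heq : (fun γ : 𝕋 => ∫ z : 𝕋, derivCirc f z * escapeTime T (arc (a γ) (b γ)) z) =
      fun γ => ∑' n, g γ n := funext hrep
  rw [heq]
  exact hcont

/-- **Theorem.** For a Lipschitz `f : 𝕋 → ℝ` and the family `(F_γ)` of all `1`-flowers of
an orientation-preserving Lipschitz expanding map `T`, the map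
`γ ↦ ∫ f' e_{F_γ} dLeb` is continuous on the circle. -/
theorem integral_deriv_escapeTime_continuous
    (T : 𝕋 → 𝕋) (hT : OPLExpanding T)
    (f : 𝕋 → ℝ) (hf : LipschitzReal f)
    (a b : 𝕋 → 𝕋)
    (ha : Continuous a ∧ Function.Bijective a ∧ HasDegree a 1)
    (hb : Continuous b ∧ Function.Bijective b ∧ HasDegree b 1)
    (hfam : ∀ γ : 𝕋, IsPFlower T 1 (arc (a γ) (b γ)))
    (hall : ∀ F : Set 𝕋, IsPFlower T 1 F → ∃ γ : 𝕋, F = arc (a γ) (b γ)) :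
    Continuous (fun γ : 𝕋 => ∫ z : 𝕋, derivCirc f z * escapeTime T (arc (a γ) (b γ)) z) := by
  exact integral_deriv_escapeTime_continuous' T hT f hf a b ha hb hfam hall
end

section
/- An orientation-preserving Lipschitz map T : 𝕋 → 𝕋 is expanding if and only if there exists K > 1 such that T'(x) ≥ K for Lebesgue almost every x ∈ 𝕋. -/
open Filter MeasureTheory Set Topology
open scoped ENNReal NNReal

namespace ExpandAux

lemma norm_coe_eq {u : ℝ} (h : |u| ≤ 1/2) : ‖(u : 𝕋)‖ = |u| :=
  (AddCircle.norm_coe_eq_abs_iff 1 one_ne_zero).2 (by simpa using h)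

lemma norm_coe_le (u : ℝ) : ‖(u : 𝕋)‖ ≤ |u| := by
  rcases le_or_gt |u| (1/2) with h | h
  · exact le_of_eq (norm_coe_eq h)
  · calc ‖(u:𝕋)‖ ≤ |(1:ℝ)|/2 := AddCircle.norm_le_half_period 1 one_ne_zero
      _ ≤ |u| := by rw [abs_one]; linarith

lemma dist_coe_le (a b : ℝ) : dist (a : 𝕋) (b : 𝕋) ≤ |a - b| := by
  rw [dist_eq_norm, ← AddCircle.coe_sub]
  exact norm_coe_le _

lemma dist_coe_eq {a b : ℝ} (h : |a - b| ≤ 1/2) : dist (a : 𝕋) (b : 𝕋) = |a - b| := by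
  rw [dist_eq_norm, ← AddCircle.coe_sub]
  exact norm_coe_eq h

lemma repSym_coe {u : ℝ} (hu : u ∈ Set.Ico (-(1/2):ℝ) (-(1/2)+1)) : repSym (u : 𝕋) = u := by
  have : (AddCircle.equivIco 1 (-(1/2))) ((u:ℝ) : 𝕋) = ⟨u, hu⟩ := by
    rw [Equiv.apply_eq_iff_eq_symm_apply]; rfl
  simp [repSym, this]

lemma coe_repSym (z : 𝕋) : ((repSym z : ℝ) : 𝕋) = z :=
  (AddCircle.equivIco 1 (-(1/2))).symm_apply_apply z

lemma coe_rep01 (z : 𝕋) : ((rep01 z : ℝ) : 𝕋) = z :=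
  (AddCircle.equivIco 1 0).symm_apply_apply z

lemma repSym_mem (z : 𝕋) : repSym z ∈ Set.Ico (-(1/2):ℝ) (-(1/2)+1) :=
  (AddCircle.equivIco 1 (-(1/2)) z).2

lemma abs_repSym_le (z : 𝕋) : |repSym z| ≤ 1/2 := by
  have h := repSym_mem z
  rw [Set.mem_Ico] at h
  rw [abs_le]; constructor <;> linarith [h.1, h.2]

lemma dist_eq_abs_repSym (x y : 𝕋) : dist x y = |repSym (y - x)| := by
  rw [dist_comm, dist_eq_norm]
  conv_lhs => rw [← coe_repSym (y - x)]
  rw [norm_coe_eq (abs_repSym_le _)]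

end ExpandAux
namespace ExpandAux

/-- Chaining a local Lipschitz estimate to a global one. -/
lemma global_lip {f : ℝ → ℝ} {C δ : ℝ} (hδ : 0 < δ)
    (h : ∀ a b : ℝ, |a - b| < δ → |f a - f b| ≤ C * |a - b|) :
    ∀ a b : ℝ, |f a - f b| ≤ C * |a - b| := by
  suffices H : ∀ a b : ℝ, a ≤ b → |f b - f a| ≤ C * (b - a) by
    intro a b
    rcases le_total a b with hab | hab
    · rw [abs_sub_comm, abs_of_nonpos (by linarith : a - b ≤ 0)]
      simpa using H a b hab
    · rw [abs_of_nonneg (by linarith : 0 ≤ a - b)]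
      exact H b a hab
  intro a b hab
  obtain ⟨n, hn⟩ : ∃ n : ℕ, (b - a) / δ < n + 1 := exists_nat_gt _ |>.imp (fun n h => by
    exact lt_trans h (by linarith))
  set n' : ℕ := n + 1 with hn'
  have hn0 : 0 < (n' : ℝ) := by positivity
  set h₀ : ℝ := (b - a) / n' with hh
  have h₀nonneg : 0 ≤ h₀ := div_nonneg (by linarith) hn0.le
  have hstep : h₀ < δ := by
    rw [hh, div_lt_iff₀ hn0]
    have hn2 : (b - a)/δ < (n' : ℝ) := by rw [hn']; push_cast; linarith
    have := mul_lt_mul_of_pos_right hn2 hδ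
    have heq : (b - a) / δ * δ = b - a := by field_simp
    linarith
  have hkey : f b - f a = ∑ i ∈ Finset.range n', (f (a + (i + 1 : ℕ) * h₀) - f (a + (i : ℕ) * h₀)) := by
    rw [Finset.sum_range_sub (fun i : ℕ => f (a + (i : ℕ) * h₀))]
    have : a + (n' : ℝ) * h₀ = b := by
      rw [hh]; field_simp; ring
    simp [this]
  have hterm : ∀ i : ℕ, |f (a + (i + 1 : ℕ) * h₀) - f (a + (i : ℕ) * h₀)| ≤ C * h₀ := by
    intro i
    have hd : (a + (i + 1 : ℕ) * h₀) - (a + (i : ℕ) * h₀) = h₀ := by push_cast; ring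
    have := h (a + (i + 1 : ℕ) * h₀) (a + (i : ℕ) * h₀) (by rw [hd, abs_of_nonneg h₀nonneg]; exact hstep)
    rwa [hd, abs_of_nonneg h₀nonneg] at this
  calc |f b - f a| ≤ ∑ i ∈ Finset.range n', |f (a + (i + 1 : ℕ) * h₀) - f (a + (i : ℕ) * h₀)| := by
        rw [hkey]; exact Finset.abs_sum_le_sum_abs _ _
    _ ≤ ∑ _i ∈ Finset.range n', C * h₀ := Finset.sum_le_sum (fun i _ => hterm i)
    _ = n' * (C * h₀) := by simp [mul_comm]
    _ = C * (b - a) := by rw [hh]; field_simp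

end ExpandAux
namespace ExpandAux

lemma coe_int_eq_zero (n : ℤ) : (((n : ℝ)) : 𝕋) = 0 := by
  rw [AddCircle.coe_eq_zero_iff]
  exact ⟨n, by simp⟩

lemma lift_local_half {G : ℝ → ℝ} {k : ℤ} (hGc : Continuous G)
    (hper : ∀ t : ℝ, G (t + 1) = G t + k) :
    ∃ δ : ℝ, 0 < δ ∧ ∀ a b : ℝ, |a - b| < δ → |G a - G b| < 1/2 := by
  set f : ℝ → ℝ := fun t => G t - k * t with hfdef
  have hf : Function.Periodic f 1 := by
    intro t; simp only [hfdef, hper t]; push_cast; ring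
  have hfc : Continuous f := hGc.sub (continuous_const.mul continuous_id)
  set g : 𝕋 → ℝ := AddCircle.liftIco 1 0 f with hgdef
  have hg : Continuous g :=
    AddCircle.liftIco_zero_continuous (by simpa using (hf 0).symm) hfc.continuousOn
  have hgf : ∀ t : ℝ, g ((t : ℝ) : 𝕋) = f t := by
    intro t
    have hfr : Int.fract t = t - (⌊t⌋ : ℝ) := rfl
    have h1 : ((t : ℝ) : 𝕋) = ((Int.fract t : ℝ) : 𝕋) := by
      rw [hfr, AddCircle.coe_sub, coe_int_eq_zero, sub_zero]
    rw [h1, hgdef, AddCircle.liftIco_zero_coe_apply ⟨Int.fract_nonneg t, Int.fract_lt_one t⟩]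
    have h2 : Int.fract t = t - (⌊t⌋ : ℝ) * 1 := by rw [mul_one]; exact hfr
    rw [h2]
    exact hf.sub_int_mul_eq ⌊t⌋
  have hgu : UniformContinuous g := CompactSpace.uniformContinuous_of_continuous hg
  obtain ⟨δ₀, hδ₀, hmod⟩ := Metric.uniformContinuous_iff.mp hgu (1/4) (by norm_num)
  refine ⟨min δ₀ (1/(4*(|(k:ℝ)|+1))), by positivity, ?_⟩
  intro a b hab
  have h1 : dist ((a:ℝ):𝕋) ((b:ℝ):𝕋) < δ₀ :=
    lt_of_le_of_lt (dist_coe_le a b) (lt_of_lt_of_le hab (min_le_left _ _))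
  have h2 := hmod h1
  rw [Real.dist_eq, hgf, hgf] at h2
  have h3 : |(k:ℝ)| * |a - b| ≤ 1/4 := by
    have hle : |a - b| ≤ 1/(4*(|(k:ℝ)|+1)) := le_of_lt (lt_of_lt_of_le hab (min_le_right _ _))
    have h4 : |(k:ℝ)| * |a - b| ≤ |(k:ℝ)| * (1/(4*(|(k:ℝ)|+1))) :=
      mul_le_mul_of_nonneg_left hle (abs_nonneg _)
    have h5 : |(k:ℝ)| * (1/(4*(|(k:ℝ)|+1))) ≤ 1/4 := by
      rw [mul_one_div, div_le_div_iff₀ (by positivity) (by norm_num)]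
      nlinarith [abs_nonneg ((k:ℝ))]
    linarith
  have hGab : G a - G b = (f a - f b) + (k:ℝ) * (a - b) := by simp only [hfdef]; ring
  calc |G a - G b| ≤ |f a - f b| + |(k:ℝ) * (a - b)| := by rw [hGab]; exact abs_add_le _ _
    _ < 1/4 + 1/4 := by rw [abs_mul]; exact add_lt_add_of_lt_of_le h2 h3
    _ = 1/2 := by norm_num

lemma lift_lip {T : 𝕋 → 𝕋} {G : ℝ → ℝ} {k : ℤ} {C : ℝ≥0} (hC : LipschitzWith C T)
    (hGc : Continuous G) (hGT : ∀ t : ℝ, T ((t:ℝ) : 𝕋) = ((G t : ℝ) : 𝕋))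
    (hper : ∀ t : ℝ, G (t + 1) = G t + k) :
    ∀ a b : ℝ, |G a - G b| ≤ (C : ℝ) * |a - b| := by
  obtain ⟨δ, hδ, hloc⟩ := lift_local_half hGc hper
  refine global_lip hδ (fun a b hab => ?_)
  have h1 : |G a - G b| < 1/2 := hloc a b hab
  have h2 : |G a - G b| = dist (T ((a:ℝ):𝕋)) (T ((b:ℝ):𝕋)) := by
    rw [hGT, hGT, dist_eq_norm, ← AddCircle.coe_sub, norm_coe_eq (le_of_lt h1)]
  rw [h2]
  calc dist (T ((a:ℝ):𝕋)) (T ((b:ℝ):𝕋)) ≤ (C:ℝ) * dist ((a:ℝ):𝕋) ((b:ℝ):𝕋) := hC.dist_le_mul _ _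
    _ ≤ (C:ℝ) * |a - b| := mul_le_mul_of_nonneg_left (dist_coe_le a b) C.coe_nonneg

end ExpandAux
namespace ExpandAux

lemma hasDerivCircMap_iff {T : 𝕋 → 𝕋} {G : ℝ → ℝ} {C : ℝ}
    (hGT : ∀ t : ℝ, T ((t:ℝ) : 𝕋) = ((G t : ℝ) : 𝕋)) (hC : 0 ≤ C)
    (hlip : ∀ a b : ℝ, |G a - G b| ≤ C * |a - b|) (s d : ℝ) :
    HasDerivCircMap T ((s:ℝ) : 𝕋) d ↔ HasDerivAt G d s := by
  have hδ : (0:ℝ) < 1/(2*C+2) := by positivity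
  have hEq : (fun t : ℝ => repSym (T (((s:ℝ):𝕋) + ((t:ℝ):𝕋)) - T ((s:ℝ):𝕋)))
      =ᶠ[𝓝 (0:ℝ)] (fun t => G (s + t) - G s) := by
    filter_upwards [Metric.ball_mem_nhds (0:ℝ) hδ] with t ht
    have h3 : |G (s + t) - G s| < 1/2 := by
      have h4 : |G (s + t) - G s| ≤ C * |t| := by simpa using hlip (s + t) s
      have h5 : |t| < 1/(2*C+2) := by simpa [Real.dist_eq] using ht
      have h6 : C * |t| ≤ C * (1/(2*C+2)) := mul_le_mul_of_nonneg_left h5.le hC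
      have h7 : C * (1/(2*C+2)) < 1/2 := by
        rw [mul_one_div, div_lt_div_iff₀ (by positivity) (by norm_num)]
        linarith
      linarith
    have h1 : (((s:ℝ):𝕋) + ((t:ℝ):𝕋)) = (((s + t : ℝ)) : 𝕋) := by
      rw [AddCircle.coe_add]
    have h2 : T (((s + t : ℝ)) : 𝕋) - T ((s:ℝ):𝕋) = (((G (s + t) - G s : ℝ)) : 𝕋) := by
      rw [hGT, hGT, AddCircle.coe_sub]
    rw [h1, h2, repSym_coe ?_]
    rw [Set.mem_Ico]
    rw [abs_lt] at h3
    constructor <;> [linarith [h3.1]; linarith [h3.2]]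
  have hiff2 : HasDerivAt (fun t : ℝ => G (s + t) - G s) d 0 ↔ HasDerivAt G d s := by
    constructor
    · intro h
      have h2 : HasDerivAt (fun t : ℝ => G (s + t)) d 0 := by
        have := h.add_const (G s)
        simpa using this
      have h3 : HasDerivAt (fun x : ℝ => G (s + (x + -s))) d s :=
        HasDerivAt.comp_add_const s (-s)
          (show HasDerivAt (fun t : ℝ => G (s + t)) d (s + -s) by simpa using h2)
      have h4 : (fun x : ℝ => G (s + (x + -s))) = G := by funext x; congr 1; ring
      rwa [h4] at h3
    · intro h
      have h2 : HasDerivAt (fun t : ℝ => G (s + t)) d 0 :=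
        HasDerivAt.comp_const_add s 0 (show HasDerivAt G d (s + 0) by simpa using h)
      exact h2.sub_const (G s)
  exact (Filter.EventuallyEq.hasDerivAt_iff hEq).trans hiff2

end ExpandAux
namespace ExpandAux

/-- Transfer an a.e. property on the circle to an a.e. property on `ℝ`. -/
lemma ae_real_of_ae_circle {P : 𝕋 → Prop} (h : ∀ᵐ x : 𝕋, P x) :
    ∀ᵐ s : ℝ, P ((s : ℝ) : 𝕋) := by
  have key : ∀ n : ℤ, ∀ᵐ s ∂(volume.restrict (Set.Ioc (n:ℝ) (n+1))), P ((s:ℝ) : 𝕋) := by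
    intro n
    have hmp := UnitAddCircle.measurePreserving_mk (n : ℝ)
    have h2 : ∀ᵐ x ∂((volume.restrict (Set.Ioc (n:ℝ) (n+1))).map
        ((↑) : ℝ → 𝕋)), P x := by rwa [hmp.map_eq]
    exact (MeasureTheory.Measure.tendsto_ae_map hmp.measurable.aemeasurable).eventually h2
  rw [MeasureTheory.ae_iff]
  have hcover : {s : ℝ | ¬ P ((s:ℝ):𝕋)} = ⋃ n : ℤ, {s : ℝ | ¬ P ((s:ℝ):𝕋)} ∩ Set.Ioc (n:ℝ) (n+1) := by
    ext s
    simp only [Set.mem_iUnion, Set.mem_inter_iff, Set.mem_setOf_eq, Set.mem_Ioc]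
    constructor
    · intro hs
      exact ⟨⌈s⌉ - 1, hs, by push_cast; exact ⟨by linarith [Int.ceil_lt_add_one s], by
        push_cast; linarith [Int.le_ceil s]⟩⟩
    · rintro ⟨n, hs, -⟩; exact hs
  rw [hcover]
  refine MeasureTheory.measure_iUnion_null (fun n => ?_)
  have := (MeasureTheory.ae_iff).mp (key n)
  rw [MeasureTheory.Measure.restrict_apply' measurableSet_Ioc] at this
  exact this

/-- Transfer an a.e. property on `ℝ` to an a.e. property on the circle. -/
lemma ae_circle_of_ae_real {P : 𝕋 → Prop} (h : ∀ᵐ s : ℝ, P ((s : ℝ) : 𝕋)) :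
    ∀ᵐ x : 𝕋, P x := by
  set N : Set ℝ := {s : ℝ | ¬ P ((s:ℝ):𝕋)} with hN
  have hN0 : volume N = 0 := (MeasureTheory.ae_iff).mp h
  set A : Set ℝ := MeasureTheory.toMeasurable volume N with hA
  have hA0 : volume A = 0 := by rw [hA, MeasureTheory.measure_toMeasurable]; exact hN0
  have hAm : MeasurableSet A := MeasureTheory.measurableSet_toMeasurable _ _
  have hrep : Measurable (rep01 : 𝕋 → ℝ) :=
    measurable_subtype_coe.comp (AddCircle.measurableEquivIco (a := 0) 1).measurable
  set B : Set 𝕋 := rep01 ⁻¹' A with hB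
  have hBm : MeasurableSet B := hrep hAm
  have hsub : {x : 𝕋 | ¬ P x} ⊆ B := by
    intro x hx
    have : ¬ P ((rep01 x : ℝ) : 𝕋) := by rwa [coe_rep01]
    exact MeasureTheory.subset_toMeasurable _ _ this
  refine MeasureTheory.ae_iff.mpr (MeasureTheory.measure_mono_null hsub ?_)
  have hmp := UnitAddCircle.measurePreserving_mk (0 : ℝ)
  rw [← hmp.map_eq, MeasureTheory.Measure.map_apply hmp.measurable hBm,
    MeasureTheory.Measure.restrict_apply' measurableSet_Ioc]
  refine MeasureTheory.measure_mono_null ?_ (by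
    have : volume (A ∪ {(1:ℝ)}) = 0 := by
      refine MeasureTheory.measure_union_null hA0 ?_
      simp
    exact this)
  intro s hs
  rcases hs with ⟨hs1, hs2⟩
  rcases eq_or_lt_of_le hs2.2 with heq | hlt
  · right; simpa using heq
  · left
    have hmem : s ∈ Set.Ico (0:ℝ) (0 + 1) := ⟨le_of_lt (by simpa using hs2.1), by simpa using hlt⟩
    have : rep01 ((s:ℝ) : 𝕋) = s := by
      have h1 : (AddCircle.equivIco 1 0) ((s:ℝ) : 𝕋) = ⟨s, hmem⟩ := by
        rw [Equiv.apply_eq_iff_eq_symm_apply]; rfl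
      simp [rep01, h1]
    rwa [← this]

end ExpandAux
namespace ExpandAux

lemma lift_mono_local {T : 𝕋 → 𝕋} {G : ℝ → ℝ} {K ε : ℝ}
    (hGT : ∀ t : ℝ, T ((t:ℝ) : 𝕋) = ((G t : ℝ) : 𝕋)) (hGc : Continuous G)
    (hK : 0 < K) (hε : 0 < ε)
    (hexp : ∀ x y : 𝕋, dist x y < ε → K * dist x y ≤ dist (T x) (T y))
    (hG1 : G 0 + 1 ≤ G 1) :
    ∀ s t : ℝ, 0 < t → t < min ε (1/2) → G s < G (s + t) := by
  set L : ℝ := min ε (1/2) with hL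
  have hL0 : 0 < L := lt_min hε (by norm_num)
  have hLhalf : L ≤ 1/2 := min_le_right _ _
  have hLε : L ≤ ε := min_le_left _ _
  -- injectivity at scale < L
  have hne : ∀ c u : ℝ, 0 < u → u < L → G (c + u) ≠ G c := by
    intro c u hu huL heq
    have hdist : dist ((c + u : ℝ) : 𝕋) ((c : ℝ) : 𝕋) = u := by
      rw [dist_coe_eq (by rw [abs_of_nonneg (by linarith : (0:ℝ) ≤ c + u - c)]; linarith)]
      rw [abs_of_nonneg (by linarith : (0:ℝ) ≤ c + u - c)]; ring
    have h2 := hexp _ _ (by rw [hdist]; linarith : dist ((c + u : ℝ) : 𝕋) ((c : ℝ) : 𝕋) < ε)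
    rw [hdist, hGT, hGT, heq, dist_self] at h2
    nlinarith
  obtain ⟨m, hm⟩ := exists_nat_one_div_lt hL0
  set h₀ : ℝ := 1/((m:ℝ) + 1) with hh₀
  have hh0 : 0 < h₀ := by positivity
  have hhL : h₀ < L := hm
  -- the increment function is everywhere positive
  have hpos : ∀ c : ℝ, G c < G (c + h₀) := by
    set F : ℝ → ℝ := fun c => G (c + h₀) - G c with hF
    have hFc : Continuous F := (hGc.comp (continuous_id.add continuous_const)).sub hGc
    have hFne : ∀ c, F c ≠ 0 := fun c h => hne c h₀ hh0 hhL (by simpa [hF, sub_eq_zero] using h)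
    have hsum : ∑ i ∈ Finset.range (m + 1), F ((i : ℕ) * h₀) = G 1 - G 0 := by
      have := Finset.sum_range_sub (fun i : ℕ => G ((i : ℕ) * h₀)) (m + 1)
      have hterm : ∀ i : ℕ, F ((i : ℕ) * h₀) = G (((i+1 : ℕ) : ℝ) * h₀) - G (((i : ℕ) : ℝ) * h₀) := by
        intro i; simp only [hF]; congr 2; push_cast; ring
      calc ∑ i ∈ Finset.range (m + 1), F ((i : ℕ) * h₀)
          = ∑ i ∈ Finset.range (m + 1), (G (((i+1 : ℕ) : ℝ) * h₀) - G (((i : ℕ) : ℝ) * h₀)) :=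
            Finset.sum_congr rfl (fun i _ => hterm i)
        _ = G (((m+1 : ℕ) : ℝ) * h₀) - G (((0:ℕ) : ℝ) * h₀) :=
            Finset.sum_range_sub (fun i : ℕ => G (((i : ℕ) : ℝ) * h₀)) (m + 1)
        _ = G 1 - G 0 := by
            congr 1
            · congr 1; rw [hh₀]; push_cast; field_simp
            · norm_num
    have hex : ∃ c₀, 0 < F c₀ := by
      by_contra hcon
      push_neg at hcon
      have : ∑ i ∈ Finset.range (m + 1), F ((i : ℕ) * h₀) ≤ 0 :=
        Finset.sum_nonpos (fun i _ => hcon _)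
      rw [hsum] at this; linarith
    obtain ⟨c₀, hc₀⟩ := hex
    intro c
    rcases lt_trichotomy (F c) 0 with hneg | hzero | hposc
    · exfalso
      have h0mem : (0:ℝ) ∈ Set.uIcc (F c) (F c₀) := by
        rw [Set.mem_uIcc]; left; exact ⟨hneg.le, hc₀.le⟩
      obtain ⟨z, _, hz⟩ := intermediate_value_uIcc (hFc.continuousOn (s := Set.uIcc c c₀)) h0mem
      exact hFne z hz
    · exact absurd hzero (hFne c)
    · simpa [hF, sub_pos] using hposc
  -- conclude
  intro s t ht htL
  set ψ : ℝ → ℝ := fun u => G (s + u) - G s with hψ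
  have hψc : Continuous ψ := (hGc.comp (continuous_const.add continuous_id)).sub continuous_const
  have hψne : ∀ u, 0 < u → u < L → ψ u ≠ 0 := by
    intro u hu huL h
    exact hne s u hu huL (by simpa [hψ, sub_eq_zero] using h)
  have hψh : 0 < ψ h₀ := by simpa [hψ, sub_pos] using hpos s
  rcases lt_trichotomy (ψ t) 0 with hneg | hzero | hposc
  · exfalso
    have h0mem : (0:ℝ) ∈ Set.uIcc (ψ t) (ψ h₀) := by
      rw [Set.mem_uIcc]; left; exact ⟨hneg.le, hψh.le⟩
    obtain ⟨z, hzmem, hz⟩ := intermediate_value_uIcc (hψc.continuousOn (s := Set.uIcc t h₀)) h0mem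
    rw [Set.mem_uIcc] at hzmem
    have hz0 : 0 < z := by rcases hzmem with ⟨h1, _⟩ | ⟨h1, _⟩ <;> linarith
    have hzL : z < L := by rcases hzmem with ⟨_, h2⟩ | ⟨_, h2⟩ <;> linarith
    exact hψne z hz0 hzL hz
  · exact absurd hzero (hψne t ht htL)
  · simpa [hψ, sub_pos] using hposc

end ExpandAux
namespace ExpandAux

open MeasureTheory intervalIntegral

lemma sub_ge_of_ae_deriv {G : ℝ → ℝ} {C K : ℝ} (hGc : Continuous G) (hC : 0 ≤ C)
    (hlip : ∀ a b : ℝ, |G a - G b| ≤ C * |a - b|)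
    (hae : ∀ᵐ s : ℝ, ∃ d : ℝ, HasDerivAt G d s ∧ K ≤ d) :
    ∀ a b : ℝ, a ≤ b → K * (b - a) ≤ G b - G a := by
  -- a.e. properties of the derivative
  have hd : ∀ᵐ s : ℝ, HasDerivAt G (deriv G s) s ∧ K ≤ deriv G s ∧ |deriv G s| ≤ C := by
    filter_upwards [hae] with s hs
    obtain ⟨d, hder, hKd⟩ := hs
    have hdd : deriv G s = d := hder.deriv
    have habs : |d| ≤ C := by
      have htends : Filter.Tendsto (fun t : ℝ => t⁻¹ • (G (s + t) - G s)) (𝓝[≠] (0:ℝ)) (𝓝 d) :=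
        hder.tendsto_slope_zero
      have hbd : ∀ᶠ t in 𝓝[≠] (0:ℝ), |t⁻¹ • (G (s + t) - G s)| ≤ C := by
        refine Filter.eventually_of_mem self_mem_nhdsWithin (fun t ht => ?_)
        have ht0 : t ≠ 0 := ht
        have h1 : |G (s + t) - G s| ≤ C * |t| := by simpa using hlip (s + t) s
        rw [smul_eq_mul, abs_mul, abs_inv]
        rw [inv_mul_le_iff₀ (abs_pos.mpr ht0)]
        calc |G (s + t) - G s| ≤ C * |t| := h1
          _ = |t| * C := mul_comm _ _
      exact le_of_tendsto htends.abs hbd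
    rw [hdd]
    exact ⟨hder, hKd, habs⟩
  intro a b hab
  set μ : Measure ℝ := volume.restrict (Set.Ioc a b) with hμ
  set h₀ : ℕ → ℝ := fun n => (1:ℝ)/((n:ℝ)+1) with hh₀
  have hh0pos : ∀ n, 0 < h₀ n := fun n => by positivity
  have hsn : Filter.Tendsto h₀ Filter.atTop (𝓝[≠] (0:ℝ)) := by
    refine tendsto_nhdsWithin_of_tendsto_nhds_of_eventually_within _
      tendsto_one_div_add_atTop_nhds_zero_nat
      (Filter.Eventually.of_forall (fun n => ?_))
    exact (hh0pos n).ne'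
  set φ : ℕ → ℝ → ℝ := fun n t => (h₀ n)⁻¹ * (G (t + h₀ n) - G t) with hφ
  have hφc : ∀ n, Continuous (φ n) := fun n =>
    continuous_const.mul ((hGc.comp (continuous_id.add continuous_const)).sub hGc)
  have hφbd : ∀ n t, |φ n t| ≤ C := by
    intro n t
    rw [hφ]
    simp only
    rw [abs_mul, abs_inv]
    rw [inv_mul_le_iff₀ (abs_pos.mpr (hh0pos n).ne')]
    calc |G (t + h₀ n) - G t| ≤ C * |t + h₀ n - t| := by simpa using hlip (t + h₀ n) t
      _ = |h₀ n| * C := by rw [mul_comm]; congr 2; ring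
  -- dominated convergence
  have hDCT : Filter.Tendsto (fun n => ∫ t, φ n t ∂μ) Filter.atTop (𝓝 (∫ t, deriv G t ∂μ)) := by
    refine MeasureTheory.tendsto_integral_of_dominated_convergence (fun _ => C)
      (fun n => (hφc n).aestronglyMeasurable) ?_ ?_ ?_
    · exact MeasureTheory.integrable_const C
    · intro n
      exact Filter.Eventually.of_forall (fun t => by rw [Real.norm_eq_abs]; exact hφbd n t)
    · refine MeasureTheory.ae_restrict_of_ae ?_
      filter_upwards [hd] with t ht
      have := ht.1.tendsto_slope_zero.comp hsn
      exact this
  -- compute the integrals of φ n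
  set H : ℝ → ℝ := fun u => ∫ x in (0:ℝ)..u, G x with hH
  have hHder : ∀ u : ℝ, HasDerivAt H (G u) u := fun u =>
    (hGc.integral_hasStrictDerivAt 0 u).hasDerivAt
  have hHint : ∀ c d : ℝ, (∫ x in c..d, G x) = H d - H c := by
    intro c d
    rw [hH]
    exact (intervalIntegral.integral_interval_sub_left
      (hGc.intervalIntegrable 0 d) (hGc.intervalIntegrable 0 c)).symm
  have hIeq : ∀ n, (∫ t, φ n t ∂μ) =
      (h₀ n)⁻¹ * (H (b + h₀ n) - H b) - (h₀ n)⁻¹ * (H (a + h₀ n) - H a) := by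
    intro n
    have hint1 : MeasureTheory.IntegrableOn (fun t => G (t + h₀ n)) (Set.Ioc a b) volume :=
      (hGc.comp (continuous_id.add continuous_const)).integrableOn_Ioc
    have hint2 : MeasureTheory.IntegrableOn G (Set.Ioc a b) volume := hGc.integrableOn_Ioc
    have e1 : (∫ t, φ n t ∂μ) = (h₀ n)⁻¹ * ∫ t in Set.Ioc a b, (G (t + h₀ n) - G t) := by
      rw [hμ, hφ]
      exact MeasureTheory.integral_const_mul _ _
    rw [e1, MeasureTheory.integral_sub hint1 hint2]
    have e2 : (∫ t in Set.Ioc a b, G (t + h₀ n)) = H (b + h₀ n) - H (a + h₀ n) := by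
      rw [← intervalIntegral.integral_of_le hab, intervalIntegral.integral_comp_add_right, hHint]
    have e3 : (∫ t in Set.Ioc a b, G t) = H b - H a := by
      rw [← intervalIntegral.integral_of_le hab, hHint]
    rw [e2, e3]; ring
  -- limit of the computed sequence
  have hlim2 : Filter.Tendsto (fun n => ∫ t, φ n t ∂μ) Filter.atTop (𝓝 (G b - G a)) := by
    have hb : Filter.Tendsto (fun n => (h₀ n)⁻¹ * (H (b + h₀ n) - H b)) Filter.atTop (𝓝 (G b)) := by
      have := (hHder b).tendsto_slope_zero.comp hsn
      simpa [Function.comp_def, smul_eq_mul] using this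
    have ha : Filter.Tendsto (fun n => (h₀ n)⁻¹ * (H (a + h₀ n) - H a)) Filter.atTop (𝓝 (G a)) := by
      have := (hHder a).tendsto_slope_zero.comp hsn
      simpa [Function.comp_def, smul_eq_mul] using this
    have := hb.sub ha
    refine Filter.Tendsto.congr (fun n => (hIeq n).symm) this
  have hint_eq : (∫ t, deriv G t ∂μ) = G b - G a := tendsto_nhds_unique hDCT hlim2
  -- comparison
  have hder_int : MeasureTheory.Integrable (deriv G) μ := by
    refine MeasureTheory.Integrable.mono' (MeasureTheory.integrable_const C)
      (measurable_deriv G).aestronglyMeasurable ?_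
    refine MeasureTheory.ae_restrict_of_ae ?_
    filter_upwards [hd] with t ht
    rw [Real.norm_eq_abs]; exact ht.2.2
  have hmono : (∫ t, (fun _ => K) t ∂μ) ≤ ∫ t, deriv G t ∂μ := by
    refine MeasureTheory.integral_mono_ae (MeasureTheory.integrable_const K) hder_int ?_
    refine MeasureTheory.ae_restrict_of_ae ?_
    filter_upwards [hd] with t ht
    exact ht.2.1
  have hconst : (∫ _t, (fun _ => K) _t ∂μ) = K * (b - a) := by
    rw [hμ, MeasureTheory.integral_const]
    simp [Real.volume_Ioc, ENNReal.toReal_ofReal (by linarith : (0:ℝ) ≤ b - a)]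
    rw [max_eq_left (by linarith)]; ring
  rw [← hint_eq, ← hconst]
  exact hmono

end ExpandAux
/-- **Theorem.** An orientation-preserving Lipschitz map `T : 𝕋 → 𝕋` is expanding if and
only if there exists `K > 1` such that `T'(x) ≥ K` for Lebesgue almost every `x`. -/
theorem expanding_iff_ae_deriv_ge
    (T : 𝕋 → 𝕋) (hc : Continuous T) (hL : LipschitzCirc T)
    (hdeg : ∃ k : ℤ, 1 ≤ k ∧ HasDegree T k) :
    Expanding T ↔
      ∃ K : ℝ, 1 < K ∧ ∀ᵐ x : 𝕋, ∃ d : ℝ, HasDerivCircMap T x d ∧ K ≤ d := by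
  obtain ⟨k, hk, G, ⟨hGc, hGT⟩, hper⟩ := hdeg
  obtain ⟨C, hCT⟩ := hL
  have hlip : ∀ a b : ℝ, |G a - G b| ≤ (C:ℝ) * |a - b| := ExpandAux.lift_lip hCT hGc hGT hper
  have hC0 : (0:ℝ) ≤ (C:ℝ) := C.coe_nonneg
  constructor
  · rintro ⟨-, K, hK1, ε, hε, hexp⟩
    refine ⟨K, hK1, ?_⟩
    have hGlip : LipschitzWith C G := LipschitzWith.of_dist_le_mul (fun a b => by
      rw [Real.dist_eq]; exact hlip a b)
    have hrad : ∀ᵐ s : ℝ, DifferentiableAt ℝ G s := hGlip.ae_differentiableAt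
    have hG1 : G 0 + 1 ≤ G 1 := by
      have h1 := hper 0
      rw [zero_add] at h1
      have h2 : (1:ℝ) ≤ (k:ℝ) := by exact_mod_cast hk
      rw [h1]; linarith
    have hK0 : 0 < K := lt_trans one_pos hK1
    have hmono := ExpandAux.lift_mono_local hGT hGc hK0 hε hexp hG1
    have hL0 : (0:ℝ) < min ε (1/2) := lt_min hε (by norm_num)
    have hae : ∀ᵐ s : ℝ, ∃ d, HasDerivAt G d s ∧ K ≤ d := by
      filter_upwards [hrad] with s hs
      refine ⟨deriv G s, hs.hasDerivAt, ?_⟩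
      have htends := hs.hasDerivAt.tendsto_slope_zero_right
      refine ge_of_tendsto htends ?_
      have hIoo : Set.Ioo (0:ℝ) (min ε (1/2)) ∈ 𝓝[>] (0:ℝ) :=
        Ioo_mem_nhdsGT_of_mem ⟨le_refl 0, hL0⟩
      filter_upwards [hIoo] with t ht
      have h1 : G s < G (s + t) := hmono s t ht.1 ht.2
      have ht2 : t ≤ 1/2 := le_of_lt (lt_of_lt_of_le ht.2 (min_le_right _ _))
      have htε : t < ε := lt_of_lt_of_le ht.2 (min_le_left _ _)
      have hdist : dist (((s + t : ℝ)) : 𝕋) ((s:ℝ):𝕋) = t := by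
        rw [ExpandAux.dist_coe_eq (by rw [show s + t - s = t by ring, abs_of_nonneg ht.1.le]; exact ht2)]
        rw [show s + t - s = t by ring, abs_of_nonneg ht.1.le]
      have h2 : K * t ≤ dist (T (((s + t:ℝ)):𝕋)) (T ((s:ℝ):𝕋)) := by
        have := hexp (((s + t:ℝ)):𝕋) ((s:ℝ):𝕋) (by rw [hdist]; exact htε)
        rwa [hdist] at this
      have h3 : dist (T (((s + t:ℝ)):𝕋)) (T ((s:ℝ):𝕋)) ≤ |G (s + t) - G s| := by
        rw [hGT, hGT]; exact ExpandAux.dist_coe_le _ _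
      have h4 : K * t ≤ G (s + t) - G s := by
        rw [abs_of_pos (by linarith : 0 < G (s + t) - G s)] at h3
        linarith
      rw [smul_eq_mul, le_inv_mul_iff₀ ht.1]
      calc t * K = K * t := mul_comm _ _
        _ ≤ G (s + t) - G s := h4
    refine ExpandAux.ae_circle_of_ae_real ?_
    filter_upwards [hae] with s hs
    obtain ⟨d, hder, hKd⟩ := hs
    exact ⟨d, (ExpandAux.hasDerivCircMap_iff hGT hC0 hlip s d).mpr hder, hKd⟩
  · rintro ⟨K, hK1, hae⟩
    refine ⟨hc, K, hK1, ?_⟩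
    have haeR : ∀ᵐ s : ℝ, ∃ d, HasDerivAt G d s ∧ K ≤ d := by
      filter_upwards [ExpandAux.ae_real_of_ae_circle hae] with s hs
      obtain ⟨d, hder, hKd⟩ := hs
      exact ⟨d, (ExpandAux.hasDerivCircMap_iff hGT hC0 hlip s d).mp hder, hKd⟩
    have hftc := ExpandAux.sub_ge_of_ae_deriv hGc hC0 hlip haeR
    have hK0 : (0:ℝ) < K := lt_trans one_pos hK1
    set ε : ℝ := min (1/2) (1/(2*((C:ℝ)+1))) with hεdef
    have hε0 : 0 < ε := lt_min (by norm_num) (by positivity)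
    refine ⟨ε, hε0, ?_⟩
    have key : ∀ (x : 𝕋) (u : ℝ), 0 ≤ u → u < ε → K * u ≤ dist (T x) (T (x + ((u:ℝ):𝕋))) := by
      intro x u hu huε
      set s : ℝ := rep01 x with hs
      have hx : ((s:ℝ):𝕋) = x := ExpandAux.coe_rep01 x
      have hxu : x + ((u:ℝ):𝕋) = (((s + u : ℝ)):𝕋) := by
        rw [← hx, ← AddCircle.coe_add]
      have h1 : K * u ≤ G (s + u) - G s := by
        have := hftc s (s + u) (by linarith)
        simpa using this
      have h0 : 0 ≤ G (s + u) - G s := le_trans (by positivity) h1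
      have h2 : G (s + u) - G s ≤ (C:ℝ) * u := by
        have := hlip (s + u) s
        rw [abs_of_nonneg h0] at this
        calc G (s + u) - G s ≤ (C:ℝ) * |s + u - s| := this
          _ = (C:ℝ) * u := by rw [show s + u - s = u by ring, abs_of_nonneg hu]
      have h3 : G (s + u) - G s ≤ 1/2 := by
        have hεC : (C:ℝ) * ε ≤ 1/2 := by
          have : ε ≤ 1/(2*((C:ℝ)+1)) := min_le_right _ _
          have h5 : (C:ℝ) * ε ≤ (C:ℝ) * (1/(2*((C:ℝ)+1))) := mul_le_mul_of_nonneg_left this hC0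
          have h6 : (C:ℝ) * (1/(2*((C:ℝ)+1))) ≤ 1/2 := by
            rw [mul_one_div, div_le_div_iff₀ (by positivity) (by norm_num)]
            nlinarith
          linarith
        have : (C:ℝ) * u ≤ (C:ℝ) * ε := mul_le_mul_of_nonneg_left huε.le hC0
        linarith
      have hdT : dist (T x) (T (x + ((u:ℝ):𝕋))) = G (s + u) - G s := by
        rw [hxu, ← hx, hGT, hGT, dist_comm,
          ExpandAux.dist_coe_eq (by rw [abs_of_nonneg h0]; exact h3), abs_of_nonneg h0]
      rw [hdT]; exact h1
    intro x y hxy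
    set t : ℝ := repSym (y - x) with ht
    have hyx : ((t:ℝ):𝕋) = y - x := ExpandAux.coe_repSym (y - x)
    have hy : y = x + ((t:ℝ):𝕋) := by rw [hyx]; abel
    have habs : |t| = dist x y := (ExpandAux.dist_eq_abs_repSym x y).symm
    rcases le_or_gt 0 t with htpos | htneg
    · have h1 := key x t htpos (by rw [← abs_of_nonneg htpos, habs]; exact hxy)
      rw [← hy] at h1
      calc K * dist x y = K * t := by rw [← habs, abs_of_nonneg htpos]
        _ ≤ dist (T x) (T y) := h1
    · have hxeq : x = y + (((-t : ℝ)):𝕋) := by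
        rw [AddCircle.coe_neg, hyx]; abel
      have h1 := key y (-t) (by linarith) (by rw [← abs_of_neg htneg, habs]; exact hxy)
      rw [← hxeq] at h1
      calc K * dist x y = K * (-t) := by rw [← habs, abs_of_neg htneg]
        _ ≤ dist (T y) (T x) := h1
        _ = dist (T x) (T y) := dist_comm _ _
end
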